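/- arXiv:math/0702351 — 4 statements merged into one kernel-verified Lean document; each statement's English description precedes it below -/
import Mathlib

section
/- Let P be a hereditary property of ordered hypergraphs such that H(π) ∈ P_{2k} for every k ∈ ℕ and every permutation π of [k]. Then |P_n| ≥ |P^{(1,2)}_n| ≥ Σ_{k=0}^{⌊n/2⌋} C(n,2k)·k! for every n ∈ ℕ. Moreover, there is exactly one hereditary property Q of ordered hypergraphs such that H(π) ∈ Q_{2k} for every permutation π of [k] (for all k) and |Q_n| = Σ_{k=0}^{⌊n/2⌋} C(n,2k)·k! for every n ∈ ℕ. -/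
/-- The element `i ∈ [k]` viewed as an element of `[2k]` (the left half). -/
def finL (k : ℕ) (i : Fin k) : Fin (2 * k) := ⟨i.1, by have := i.isLt; omega⟩

/-- The element `π(i) + k` viewed as an element of `[2k]` (the right half). -/
def finR (k : ℕ) (i : Fin k) : Fin (2 * k) := ⟨k + i.1, by have := i.isLt; omega⟩

/-- The ordered hypergraph `H(π)` on `[2k]` whose edges are the pairs `{i, π(i)+k}`
for `i ∈ [k]`. -/
def Hperm (k : ℕ) (π : Equiv.Perm (Fin k)) : Finset (Finset (Fin (2 * k))) :=
  Finset.univ.image fun i : Fin k => ({finL k i, finR k (π i)} : Finset (Fin (2 * k)))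

/-- The induced sub-hypergraph of `H` on `U ⊆ [n]`: its edges are the images of the sets
`e ∩ U` of size at least 2 (`e` an edge of `H`) under the order isomorphism `U → [|U|]`. -/
def inducedSub {n : ℕ} (H : Finset (Finset (Fin n))) (U : Finset (Fin n)) :
    Finset (Finset (Fin U.card)) :=
  (H.image fun e => Finset.univ.filter fun i : Fin U.card => U.orderEmbOfFin rfl i ∈ e).filter
    fun f => 2 ≤ f.card

/-- `P^{(1,2)}_n`: the hypergraphs in `P_n` in which every vertex lies in at most one edge
and every edge has size at most 2. -/
def P12 (P : ∀ n : ℕ, Set (Finset (Finset (Fin n)))) (n : ℕ) : Set (Finset (Finset (Fin n))) :=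
  {H | H ∈ P n ∧ (∀ v : Fin n, (H.filter fun e => v ∈ e).card ≤ 1) ∧ ∀ e ∈ H, e.card ≤ 2}

open Finset

-- pair lemmas
lemma pair_min' {n : ℕ} {a b : Fin n} (h : a < b) :
    ({a, b} : Finset (Fin n)).min' (by simp [Finset.insert_nonempty]) = a := by
  apply le_antisymm
  · exact Finset.min'_le _ a (by simp)
  · apply Finset.le_min'
    intro y hy
    rcases Finset.mem_insert.1 hy with rfl | hy
    · rfl
    · simp at hy; subst hy; exact h.le

lemma pair_max' {n : ℕ} {a b : Fin n} (h : a < b) :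
    ({a, b} : Finset (Fin n)).max' (by simp [Finset.insert_nonempty]) = b := by
  apply le_antisymm
  · apply Finset.max'_le
    intro y hy
    rcases Finset.mem_insert.1 hy with rfl | hy
    · exact h.le
    · exact le_of_eq (Finset.mem_singleton.1 hy)
  · exact Finset.le_max' _ b (by simp)

-- cast machinery
def ccast {a b : ℕ} (h : a = b) (X : Finset (Finset (Fin a))) : Finset (Finset (Fin b)) :=
  X.map (Finset.mapEmbedding (finCongr h).toEmbedding).toEmbedding

lemma ccast_rfl {a : ℕ} (X : Finset (Finset (Fin a))) : ccast rfl X = X := by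
  unfold ccast
  have : (finCongr (rfl : a = a)).toEmbedding = Function.Embedding.refl _ := by
    ext x; simp
  rw [this]
  have h2 : (Finset.mapEmbedding (Function.Embedding.refl (Fin a))).toEmbedding
      = Function.Embedding.refl _ := by
    ext f x
    show x ∈ Finset.map (Function.Embedding.refl (Fin a)) f ↔ _
    simp
  rw [h2, Finset.map_refl]

lemma ccast_mem {Q : ∀ m : ℕ, Set (Finset (Finset (Fin m)))} {a b : ℕ} (h : a = b)
    {X : Finset (Finset (Fin a))} (hX : X ∈ Q a) : ccast h X ∈ Q b := by
  subst h; rwa [ccast_rfl]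

def thresh (n : ℕ) (π : Equiv.Perm (Fin n)) (t : ℕ) : Finset (Finset (Fin n)) :=
  (Finset.univ.filter fun x : Fin n => x.1 < t ∧ t ≤ (π x).1).image
    fun x => ({x, π x} : Finset (Fin n))

def Uset (n t : ℕ) : Finset (Fin (2 * n)) :=
  Finset.univ.filter fun x => x.1 < t ∨ n + t ≤ x.1

lemma Uset_card {n t : ℕ} (ht : t ≤ n) : (Uset n t).card = n := by
  have himg : Uset n t = Finset.univ.image
      (fun q : Fin n => if q.1 < t then (⟨q.1, by omega⟩ : Fin (2*n))
        else ⟨n + q.1, by have := q.isLt; omega⟩) := by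
    ext x
    simp only [Uset, Finset.mem_filter, Finset.mem_univ, true_and, Finset.mem_image]
    constructor
    · rintro (hx | hx)
      · exact ⟨⟨x.1, by omega⟩, by simp [hx]⟩
      · refine ⟨⟨x.1 - n, by have := x.isLt; omega⟩, ?_⟩
        have : ¬ (x.1 - n < t) := by omega
        simp only [this, if_false]
        ext; simp; omega
    · rintro ⟨q, rfl⟩
      by_cases hq : q.1 < t <;> simp [hq] <;> omega
  rw [himg, Finset.card_image_of_injective _ ?_, Finset.card_univ, Fintype.card_fin]
  intro q q' hqq'
  by_cases h1 : q.1 < t <;> by_cases h2 : q'.1 < t <;>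
    simp only [h1, h2, if_true, if_false, Fin.mk.injEq] at hqq' <;>
    · apply Fin.ext; omega

lemma Uset_emb_val {n t : ℕ} (ht : t ≤ n) (q : Fin (Uset n t).card) :
    (((Uset n t).orderEmbOfFin rfl) q).1 = if q.1 < t then q.1 else n + q.1 := by
  have hU : (Uset n t).card = n := Uset_card ht
  have hqn : ∀ r : Fin (Uset n t).card, r.1 < n := fun r => by have := r.isLt; omega
  set f : Fin (Uset n t).card → Fin (2 * n) := fun r =>
    if r.1 < t then ⟨r.1, by have := hqn r; omega⟩ else ⟨n + r.1, by have := hqn r; omega⟩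
    with hf
  have hfs : ∀ r, f r ∈ Uset n t := by
    intro r
    simp only [Uset, Finset.mem_filter, Finset.mem_univ, true_and, hf]
    by_cases hr : r.1 < t <;> simp [hr] <;> omega
  have hmono : StrictMono f := by
    intro r r' hrr'
    have : r.1 < r'.1 := hrr'
    simp only [hf]
    by_cases h1 : r.1 < t <;> by_cases h2 : r'.1 < t <;>
      simp only [h1, h2, if_true, if_false] <;>
      first
      | (exact Fin.mk_lt_mk.2 (by omega))
      | omega
  have := Finset.orderEmbOfFin_unique (rfl : (Uset n t).card = (Uset n t).card) hfs hmono
  have hfq : f q = (Uset n t).orderEmbOfFin rfl q := congrFun this q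
  rw [← hfq, hf]
  by_cases hq : q.1 < t <;> simp [hq]

lemma core_eq {n t : ℕ} (π : Equiv.Perm (Fin n)) (ht : t ≤ n) :
    ccast (Uset_card ht) (inducedSub (Hperm n π) (Uset n t)) = thresh n π t := by
  have hU : (Uset n t).card = n := Uset_card ht
  set U := Uset n t with hUdef
  set emb := U.orderEmbOfFin rfl with hemb
  -- characterization of membership in the filtered sets
  have hchar : ∀ (x : Fin n) (q : Fin U.card),
      (emb q ∈ ({finL n x, finR n (π x)} : Finset (Fin (2*n)))) ↔
      ((q.1 < t ∧ q.1 = x.1) ∨ (¬ q.1 < t ∧ q.1 = (π x).1)) := by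
    intro x q
    have hval : (emb q).1 = if q.1 < t then q.1 else n + q.1 := Uset_emb_val ht q
    have hxn := x.isLt
    have hpxn := (π x).isLt
    have hqn : q.1 < n := by have := q.isLt; omega
    simp only [Finset.mem_insert, Finset.mem_singleton, Fin.ext_iff, hval, finL, finR]
    by_cases hq : q.1 < t <;> simp [hq] <;> omega
  have hFq : ∀ x : Fin n,
      (Finset.univ.filter fun q : Fin U.card => emb q ∈ ({finL n x, finR n (π x)} : Finset (Fin (2*n))))
      = Finset.univ.filter fun q : Fin U.card =>
          ((q.1 < t ∧ q.1 = x.1) ∨ (¬ q.1 < t ∧ q.1 = (π x).1)) := by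
    intro x
    ext q
    simp only [Finset.mem_filter, Finset.mem_univ, true_and]
    exact hchar x q
  -- the two candidate elements
  have hbx : ∀ x : Fin n, x.1 < U.card := fun x => by have := x.isLt; omega
  -- if the condition fails, the filter has at most one element
  have hsmall : ∀ x : Fin n, ¬ (x.1 < t ∧ t ≤ (π x).1) →
      ((Finset.univ.filter fun q : Fin U.card =>
          ((q.1 < t ∧ q.1 = x.1) ∨ (¬ q.1 < t ∧ q.1 = (π x).1))).card ≤ 1) := by
    intro x hx
    apply Finset.card_le_one.2
    intro q hq q' hq'
    simp only [Finset.mem_filter, Finset.mem_univ, true_and] at hq hq'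
    apply Fin.ext
    omega
  have hpair : ∀ x : Fin n, (x.1 < t ∧ t ≤ (π x).1) →
      (Finset.univ.filter fun q : Fin U.card =>
          ((q.1 < t ∧ q.1 = x.1) ∨ (¬ q.1 < t ∧ q.1 = (π x).1)))
      = {⟨x.1, hbx x⟩, ⟨(π x).1, hbx (π x)⟩} := by
    intro x hx
    ext q
    simp only [Finset.mem_filter, Finset.mem_univ, true_and, Finset.mem_insert,
      Finset.mem_singleton, Fin.ext_iff]
    have := x.isLt
    omega
  classical
  ext f
  simp only [ccast, inducedSub, Hperm, Finset.image_image, Finset.mem_map,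
    Finset.mem_filter, Finset.mem_image, Finset.mem_univ, true_and, thresh]
  constructor
  · rintro ⟨g, ⟨⟨x, hgx⟩, hcard⟩, rfl⟩
    rw [Function.comp_apply ] at hgx
    rw [hFq x] at hgx
    by_cases hx : x.1 < t ∧ t ≤ (π x).1
    · refine ⟨x, hx, ?_⟩
      rw [hpair x hx] at hgx
      subst hgx
      show _ = (Finset.mapEmbedding (finCongr hU).toEmbedding) _
      rw [Finset.mapEmbedding_apply, Finset.map_insert, Finset.map_singleton]
      ext q
      simp [Fin.ext_iff]
    · exfalso
      rw [← hgx] at hcard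
      have := hsmall x hx
      omega
  · rintro ⟨x, hx, rfl⟩
    refine ⟨{⟨x.1, hbx x⟩, ⟨(π x).1, hbx (π x)⟩}, ⟨⟨x, ?_⟩, ?_⟩, ?_⟩
    · rw [Function.comp_apply, hFq x, hpair x hx]
    · have hne : (⟨x.1, hbx x⟩ : Fin U.card) ≠ ⟨(π x).1, hbx (π x)⟩ := by
        simp only [ne_eq, Fin.ext_iff]; omega
      rw [Finset.card_insert_of_notMem (by simpa using hne), Finset.card_singleton]
    · show (Finset.mapEmbedding (finCongr hU).toEmbedding) _ = _
      rw [Finset.mapEmbedding_apply, Finset.map_insert, Finset.map_singleton]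
      ext q
      simp [Fin.ext_iff]

lemma thresh_mem {Q : ∀ m : ℕ, Set (Finset (Finset (Fin m)))}
    (hhered : ∀ n : ℕ, ∀ H ∈ Q n, ∀ U : Finset (Fin n), inducedSub H U ∈ Q U.card)
    (hH : ∀ (k : ℕ) (π : Equiv.Perm (Fin k)), Hperm k π ∈ Q (2 * k))
    {n : ℕ} (π : Equiv.Perm (Fin n)) {t : ℕ} (ht : t ≤ n) : thresh n π t ∈ Q n := by
  rw [← core_eq π ht]
  exact ccast_mem (Uset_card ht) (hhered _ _ (hH n π) (Uset n t))

def Cross (n : ℕ) : Set (Finset (Finset (Fin n))) :=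
  {H | (∀ e ∈ H, e.card = 2) ∧ (∀ e ∈ H, ∀ g ∈ H, e ≠ g → Disjoint e g) ∧
    ∀ e ∈ H, ∀ g ∈ H, ∀ (he : e.Nonempty) (hg : g.Nonempty), e.min' he < g.max' hg}

lemma image_min' {α β : Type*} [LinearOrder α] [LinearOrder β] [DecidableEq β] {f : α → β} (hf : Monotone f)
    (s : Finset α) (hs : s.Nonempty) (ht : (s.image f).Nonempty) :
    (s.image f).min' ht = f (s.min' hs) := by
  apply le_antisymm
  · exact Finset.min'_le _ _ (Finset.mem_image_of_mem f (s.min'_mem hs))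
  · apply Finset.le_min'
    intro y hy
    obtain ⟨x, hx, rfl⟩ := Finset.mem_image.1 hy
    exact hf (Finset.min'_le s x hx)

lemma image_max' {α β : Type*} [LinearOrder α] [LinearOrder β] [DecidableEq β] {f : α → β} (hf : Monotone f)
    (s : Finset α) (hs : s.Nonempty) (ht : (s.image f).Nonempty) :
    (s.image f).max' ht = f (s.max' hs) := by
  apply le_antisymm
  · apply Finset.max'_le
    intro y hy
    obtain ⟨x, hx, rfl⟩ := Finset.mem_image.1 hy
    exact hf (Finset.le_max' s x hx)
  · exact Finset.le_max' _ _ (Finset.mem_image_of_mem f (s.max'_mem hs))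

lemma hperm_cross (k : ℕ) (π : Equiv.Perm (Fin k)) : Hperm k π ∈ Cross (2 * k) := by
  have hlt : ∀ i j : Fin k, finL k i < finR k j := by
    intro i j
    simp only [finL, finR, Fin.mk_lt_mk]
    have := i.isLt; omega
  have hLR : ∀ i j : Fin k, finL k i ≠ finR k j := fun i j => ne_of_lt (hlt i j)
  have hLinj : ∀ i j : Fin k, finL k i = finL k j → i = j := by
    intro i j h
    simp only [finL, Fin.mk.injEq] at h
    exact Fin.ext h
  have hRinj : ∀ i j : Fin k, finR k i = finR k j → i = j := by
    intro i j h
    simp only [finR, Fin.mk.injEq] at h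
    exact Fin.ext (by omega)
  refine ⟨?_, ?_, ?_⟩
  · intro e he
    obtain ⟨i, _, rfl⟩ := Finset.mem_image.1 he
    rw [Finset.card_insert_of_notMem (by simp [hLR i (π i)]), Finset.card_singleton]
  · intro e he g hg hne
    obtain ⟨i, _, rfl⟩ := Finset.mem_image.1 he
    obtain ⟨j, _, rfl⟩ := Finset.mem_image.1 hg
    have hij : i ≠ j := by rintro rfl; exact hne rfl
    rw [Finset.disjoint_left]
    intro a ha ha'
    simp only [Finset.mem_insert, Finset.mem_singleton] at ha ha'
    rcases ha with rfl | rfl <;> rcases ha' with h | h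
    · exact hij (hLinj _ _ h)
    · exact hLR _ _ h
    · exact hLR _ _ h.symm
    · exact hij (π.injective (hRinj _ _ h))
  · intro e he g hg hne hng
    obtain ⟨i, _, rfl⟩ := Finset.mem_image.1 he
    obtain ⟨j, _, rfl⟩ := Finset.mem_image.1 hg
    rw [pair_min' (hlt i (π i)), pair_max' (hlt j (π j))]
    exact hlt i (π j)

lemma cross_hered {n : ℕ} {H : Finset (Finset (Fin n))} (hH : H ∈ Cross n)
    (U : Finset (Fin n)) : inducedSub H U ∈ Cross U.card := by
  obtain ⟨hcard2, hdisj, hcross⟩ := hH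
  have hinj : Function.Injective (U.orderEmbOfFin (rfl : U.card = U.card)) :=
    (U.orderEmbOfFin rfl).injective
  have hshape : ∀ f ∈ inducedSub H U, ∃ e ∈ H,
      f = Finset.univ.filter (fun q : Fin U.card => U.orderEmbOfFin rfl q ∈ e) ∧ f.card = 2 ∧
      f.image (U.orderEmbOfFin rfl) = e := by
    intro f hf
    obtain ⟨hf1, hcard⟩ := Finset.mem_filter.1 hf
    obtain ⟨e, he, rfl⟩ := Finset.mem_image.1 hf1
    have hsub : (Finset.univ.filter fun q : Fin U.card => U.orderEmbOfFin rfl q ∈ e).image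
        (U.orderEmbOfFin rfl) ⊆ e := by
      intro x hx
      obtain ⟨q, hq, rfl⟩ := Finset.mem_image.1 hx
      exact (Finset.mem_filter.1 hq).2
    have hle : (Finset.univ.filter fun q : Fin U.card => U.orderEmbOfFin rfl q ∈ e).card
        ≤ e.card := by
      rw [← Finset.card_image_of_injective _ hinj]
      exact Finset.card_le_card hsub
    have he2 := hcard2 e he
    have hcf : (Finset.univ.filter fun q : Fin U.card =>
        U.orderEmbOfFin rfl q ∈ e).card = 2 := by omega
    refine ⟨e, he, rfl, hcf, ?_⟩
    apply Finset.eq_of_subset_of_card_le hsub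
    rw [Finset.card_image_of_injective _ hinj]
    omega
  refine ⟨?_, ?_, ?_⟩
  · intro f hf
    obtain ⟨e, he, _, hc, _⟩ := hshape f hf
    exact hc
  · intro f hf g hg hne
    obtain ⟨e, he, hfe, _, _⟩ := hshape f hf
    obtain ⟨e', he', hge, _, _⟩ := hshape g hg
    have hee : e ≠ e' := by
      rintro rfl
      exact hne (hfe.trans hge.symm)
    rw [Finset.disjoint_left]
    intro q hq hq'
    rw [hfe, Finset.mem_filter] at hq
    rw [hge, Finset.mem_filter] at hq'
    exact Finset.disjoint_left.1 (hdisj e he e' he' hee) hq.2 hq'.2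
  · intro f hf g hg hnf hng
    obtain ⟨e, he, hfe, hc1, hfi⟩ := hshape f hf
    obtain ⟨e', he', hge, hc2, hgi⟩ := hshape g hg
    subst hfi
    subst hgi
    have hne : (f.image (U.orderEmbOfFin rfl)).Nonempty := hnf.image _
    have hne' : (g.image (U.orderEmbOfFin rfl)).Nonempty := hng.image _
    have := hcross _ he _ he' hne hne'
    rw [image_min' (U.orderEmbOfFin rfl).monotone f hnf hne,
      image_max' (U.orderEmbOfFin rfl).monotone g hng hne'] at this
    exact (U.orderEmbOfFin rfl).lt_iff_lt.1 this

def mkM {n : ℕ} (k : ℕ) (S : Finset (Fin n)) (hS : S.card = 2 * k) (σ : Equiv.Perm (Fin k)) :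
    Finset (Finset (Fin n)) :=
  Finset.univ.image fun i : Fin k =>
    ({S.orderEmbOfFin hS (finL k i), S.orderEmbOfFin hS (finR k (σ i))} : Finset (Fin n))

def halfSwapFun (k : ℕ) (σ : Equiv.Perm (Fin k)) (x : Fin (2 * k)) : Fin (2 * k) :=
  if h : x.1 < k then ⟨k + (σ ⟨x.1, h⟩).1, by have := (σ ⟨x.1, h⟩).isLt; omega⟩
  else Fin.castLE (by omega) (σ.symm ⟨x.1 - k, by have := x.isLt; omega⟩)

lemma halfSwap_invol (k : ℕ) (σ : Equiv.Perm (Fin k)) : Function.Involutive (halfSwapFun k σ) := by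
  intro x
  by_cases h : x.1 < k
  · have e1 : halfSwapFun k σ x = ⟨k + (σ ⟨x.1, h⟩).1, by have := (σ ⟨x.1, h⟩).isLt; omega⟩ := by
      rw [halfSwapFun, dif_pos h]
    rw [e1, halfSwapFun, dif_neg (by simp)]
    apply Fin.ext
    simp only [Fin.coe_castLE]
    have h3 : (⟨k + (σ ⟨x.1, h⟩).1 - k, by have := (σ ⟨x.1, h⟩).isLt; omega⟩ : Fin k)
        = σ ⟨x.1, h⟩ := by
      apply Fin.ext; simp
    rw [h3, Equiv.symm_apply_apply]
  · have e1 : halfSwapFun k σ x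
        = Fin.castLE (by omega) (σ.symm ⟨x.1 - k, by have := x.isLt; omega⟩) := by
      rw [halfSwapFun, dif_neg h]
    have hlt : (σ.symm ⟨x.1 - k, by have := x.isLt; omega⟩).1 < k := (σ.symm _).isLt
    have hlow : ∀ (y : Fin (2*k)) (hy : y.1 < k),
        (halfSwapFun k σ y).1 = k + (σ ⟨y.1, hy⟩).1 := by
      intro y hy
      rw [halfSwapFun, dif_pos hy]
    apply Fin.ext
    rw [e1, hlow _ (by simpa using hlt)]
    have h3 : (⟨(Fin.castLE (by omega : k ≤ 2*k) (σ.symm ⟨x.1 - k, by have := x.isLt; omega⟩)).1,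
        by simpa using hlt⟩ : Fin k) = σ.symm ⟨x.1 - k, by have := x.isLt; omega⟩ := by
      apply Fin.ext; simp
    rw [h3, Equiv.apply_symm_apply]
    show k + (x.1 - k) = x.1
    omega

def halfSwap (k : ℕ) (σ : Equiv.Perm (Fin k)) : Equiv.Perm (Fin (2 * k)) :=
  (halfSwap_invol k σ).toPerm

lemma halfSwap_finL (k : ℕ) (σ : Equiv.Perm (Fin k)) (i : Fin k) :
    halfSwap k σ (finL k i) = finR k (σ i) := by
  show halfSwapFun k σ (finL k i) = finR k (σ i)
  rw [halfSwapFun, dif_pos (by exact i.isLt)]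
  apply Fin.ext
  simp [finL, finR, Fin.eta]

lemma halfSwap_finR (k : ℕ) (σ : Equiv.Perm (Fin k)) (j : Fin k) :
    halfSwap k σ (finR k j) = finL k (σ.symm j) := by
  show halfSwapFun k σ (finR k j) = finL k (σ.symm j)
  rw [halfSwapFun, dif_neg (by simp [finR])]
  apply Fin.ext
  have h3 : (⟨(finR k j).1 - k, by have := j.isLt; simp [finR]⟩ : Fin k) = j := by
    apply Fin.ext; simp [finR]
  simp only [Fin.coe_castLE, finL]
  rw [h3]

lemma mkM_eq_thresh {n k : ℕ} (S : Finset (Fin n)) (hS : S.card = 2 * k)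
    (σ : Equiv.Perm (Fin k)) :
    ∃ (π : Equiv.Perm (Fin n)) (t : ℕ), t ≤ n ∧ thresh n π t = mkM k S hS σ := by
  rcases Nat.eq_zero_or_pos k with rfl | hk
  · refine ⟨1, 0, Nat.zero_le n, ?_⟩
    rw [thresh, mkM]
    rw [Finset.filter_false_of_mem (fun x _ => by simp), Finset.univ_eq_empty,
      Finset.image_empty, Finset.image_empty]
  · set s := S.orderEmbOfFin hS with hsdef
    set π := (halfSwap k σ).viaEmbedding s.toEmbedding with hπ
    have hcoe : ⇑s.toEmbedding = ⇑s := rfl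
    set i0 : Fin k := ⟨0, hk⟩ with hi0
    set t := (s (finR k i0)).1 with htdef
    have hmono := s.strictMono
    have happ : ∀ y : Fin (2 * k), π (s y) = s (halfSwap k σ y) := by
      intro y
      have := (halfSwap k σ).viaEmbedding_apply s.toEmbedding y
      rw [hcoe] at this
      exact this
    refine ⟨π, t, le_of_lt (s (finR k i0)).isLt, ?_⟩
    rw [thresh, mkM]
    have hset : Finset.univ.filter (fun x : Fin n => x.1 < t ∧ t ≤ (π x).1)
        = Finset.univ.image (fun i : Fin k => s (finL k i)) := by
      ext x
      simp only [Finset.mem_filter, Finset.mem_univ, true_and, Finset.mem_image]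
      constructor
      · rintro ⟨hx1, hx2⟩
        by_cases hx : x ∈ Set.range ⇑s.toEmbedding
        · obtain ⟨y, hy⟩ := hx
          rw [hcoe] at hy
          subst hy
          by_cases hyk : y.1 < k
          · have hfy : finL k ⟨y.1, hyk⟩ = y := Fin.ext rfl
            exact ⟨⟨y.1, hyk⟩, by rw [hfy]⟩
          · exfalso
            have hle : finR k i0 ≤ y := by
              rw [Fin.le_def]
              simp only [finR, hi0]
              omega
            have := hmono.monotone hle
            rw [Fin.le_def] at this
            omega
        · rw [Equiv.Perm.viaEmbedding_apply_of_notMem _ _ x hx] at hx2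
          omega
      · rintro ⟨i, rfl⟩
        have h1 : finL k i < finR k i0 := by
          rw [Fin.lt_def]
          simp only [finL, finR, hi0]
          have := i.isLt
          omega
        refine ⟨hmono h1, ?_⟩
        rw [happ (finL k i), halfSwap_finL]
        have h2 : finR k i0 ≤ finR k (σ i) := by
          rw [Fin.le_def]
          simp only [finR, hi0]
          omega
        exact hmono.monotone h2
    rw [hset, Finset.image_image]
    apply Finset.image_congr
    intro i _
    simp only [Function.comp_apply]
    rw [happ (finL k i), halfSwap_finL]

lemma mkM_cross {n k : ℕ} (S : Finset (Fin n)) (hS : S.card = 2 * k) (σ : Equiv.Perm (Fin k)) :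
    mkM k S hS σ ∈ Cross n := by
  set s := S.orderEmbOfFin hS with hsdef
  have hmono := s.strictMono
  have hab : ∀ i j : Fin k, s (finL k i) < s (finR k j) := by
    intro i j
    apply hmono
    rw [Fin.lt_def]
    simp only [finL, finR]
    have := i.isLt
    omega
  have haa : ∀ i j : Fin k, s (finL k i) = s (finL k j) → i = j := by
    intro i j h
    have := s.injective h
    simp only [finL, Fin.mk.injEq] at this
    exact Fin.ext this
  have hbb : ∀ i j : Fin k, s (finR k i) = s (finR k j) → i = j := by
    intro i j h
    have := s.injective h
    simp only [finR, Fin.mk.injEq] at this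
    exact Fin.ext (by omega)
  refine ⟨?_, ?_, ?_⟩
  · intro e he
    obtain ⟨i, _, rfl⟩ := Finset.mem_image.1 he
    rw [Finset.card_insert_of_notMem (by rw [Finset.mem_singleton]; exact (hab i (σ i)).ne), Finset.card_singleton]
  · intro e he g hg hne
    obtain ⟨i, _, rfl⟩ := Finset.mem_image.1 he
    obtain ⟨j, _, rfl⟩ := Finset.mem_image.1 hg
    have hij : i ≠ j := by rintro rfl; exact hne rfl
    rw [Finset.disjoint_left]
    intro x hx hx'
    simp only [Finset.mem_insert, Finset.mem_singleton] at hx hx'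
    rcases hx with rfl | rfl <;> rcases hx' with h | h
    · exact hij (haa _ _ h)
    · exact (hab i (σ j)).ne h
    · exact (hab j (σ i)).ne h.symm
    · exact hij (σ.injective (hbb _ _ h))
  · intro e he g hg hne hng
    obtain ⟨i, _, rfl⟩ := Finset.mem_image.1 he
    obtain ⟨j, _, rfl⟩ := Finset.mem_image.1 hg
    rw [pair_min' (hab i (σ i)), pair_max' (hab j (σ j))]
    exact hab i (σ j)

lemma mkM_mem {Q : ∀ m : ℕ, Set (Finset (Finset (Fin m)))}
    (hhered : ∀ n : ℕ, ∀ H ∈ Q n, ∀ U : Finset (Fin n), inducedSub H U ∈ Q U.card)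
    (hHQ : ∀ (k : ℕ) (π : Equiv.Perm (Fin k)), Hperm k π ∈ Q (2 * k))
    {n k : ℕ} (S : Finset (Fin n)) (hS : S.card = 2 * k) (σ : Equiv.Perm (Fin k)) :
    mkM k S hS σ ∈ Q n := by
  obtain ⟨π, t, ht, heq⟩ := mkM_eq_thresh S hS σ
  rw [← heq]
  exact thresh_mem hhered hHQ π ht

lemma cross_repr {n : ℕ} {H : Finset (Finset (Fin n))} (hHc : H ∈ Cross n) :
    ∃ (k : ℕ) (S : Finset (Fin n)) (hS : S.card = 2 * k) (σ : Equiv.Perm (Fin k)),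
      H = mkM k S hS σ ∧ H.card = k := by
  classical
  obtain ⟨hcard2, hdisj, hcross⟩ := hHc
  have huniq : ∀ (x : Fin n), ∀ e ∈ H, ∀ e' ∈ H, x ∈ e → x ∈ e' → e = e' := by
    intro x e he e' he' hx hx'
    by_contra hne
    exact Finset.disjoint_left.1 (hdisj e he e' he' hne) hx hx'
  have hne : ∀ e ∈ H, e.Nonempty := by
    intro e he
    rw [← Finset.card_pos, hcard2 e he]
    omega
  have hpair : ∀ e ∈ H, ∃ a b : Fin n, a < b ∧ e = {a, b} := by
    intro e he
    obtain ⟨x, y, hxy, rfl⟩ := Finset.card_eq_two.1 (hcard2 e he)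
    rcases lt_or_gt_of_ne hxy with h | h
    · exact ⟨x, y, h, rfl⟩
    · exact ⟨y, x, h, Finset.pair_comm x y⟩
  set k := H.card with hk
  set S := H.biUnion id with hSdef
  have hS : S.card = 2 * k := by
    have h1 := Finset.card_biUnion (s := H) (t := fun e => e)
      (fun e he f hf hn => hdisj e he f hf hn)
    have h2 : ∑ e ∈ H, e.card = ∑ _e ∈ H, 2 := Finset.sum_congr rfl (fun e he => hcard2 e he)
    have h3 : (H.biUnion fun e => e).card = H.card * 2 := by
      rw [h1, h2, Finset.sum_const, smul_eq_mul]
    show (H.biUnion fun e => e).card = 2 * k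
    omega
  have hmemS : ∀ x : Fin n, x ∈ S ↔ ∃ e ∈ H, x ∈ e := by
    intro x
    simp [hSdef, Finset.mem_biUnion]
  set s := S.orderEmbOfFin hS with hsdef
  have hsurjS : ∀ x ∈ S, ∃ p : Fin (2 * k), s p = x := by
    intro x hx
    have : x ∈ Set.range ⇑s := by
      rw [hsdef, Finset.range_orderEmbOfFin]
      exact hx
    exact this
  have hsS : ∀ p, s p ∈ S := fun p => Finset.orderEmbOfFin_mem S hS p
  set A := S.filter (fun x => ∃ e ∈ H, x ∈ e ∧ ∀ y ∈ e, x ≤ y) with hAdef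
  have hAcard : A.card = k := by
    have h1 : H.card = A.card := by
      apply Finset.card_bij (fun e he => e.min' (hne e he))
      · intro e he
        rw [hAdef, Finset.mem_filter]
        exact ⟨(hmemS _).2 ⟨e, he, e.min'_mem _⟩, e, he, e.min'_mem _,
          fun y hy => e.min'_le y hy⟩
      · intro e he e' he' hmin
        exact huniq _ e he e' he' (by rw [← hmin]; exact e.min'_mem _) (e'.min'_mem (hne e' he'))
      · intro x hx
        rw [hAdef, Finset.mem_filter] at hx
        obtain ⟨-, e, he, hxe, hxle⟩ := hx
        exact ⟨e, he, le_antisymm (e.min'_le x hxe) (Finset.le_min' _ _ _ hxle)⟩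
    omega
  -- the minima occupy exactly the first k positions
  have hsplit : ∀ p : Fin (2 * k), s p ∈ A ↔ p.1 < k := by
    have hdc : ∀ p q : Fin (2 * k), p ≤ q → s q ∈ A → s p ∈ A := by
      intro p q hpq hq
      by_contra hp
      obtain ⟨e, he, hpe⟩ := (hmemS (s p)).1 (hsS p)
      obtain ⟨a, b, hab, hepair⟩ := hpair e he
      subst hepair
      have hspb : s p = b := by
        have : s p = a ∨ s p = b := by simpa using hpe
        rcases this with rfl | rfl
        · exfalso
          apply hp
          rw [hAdef, Finset.mem_filter]
          refine ⟨(hmemS _).2 ⟨_, he, hpe⟩, _, he, hpe, ?_⟩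
          intro y hy
          rcases Finset.mem_insert.1 hy with rfl | hy
          · exact le_refl _
          · rw [Finset.mem_singleton] at hy
            subst hy
            exact le_of_lt hab
        · rfl
      have hmax : ({a, b} : Finset (Fin n)).max' (hne _ he) = s p := by
        rw [hspb]
        exact pair_max' hab
      rw [hAdef, Finset.mem_filter] at hq
      obtain ⟨-, f, hf, hqf, hqle⟩ := hq
      have hmin : f.min' (hne f hf) = s q :=
        le_antisymm (f.min'_le _ hqf) (Finset.le_min' _ _ _ hqle)
      have hlt := hcross f hf ({a, b} : Finset (Fin n)) he (hne f hf) (hne _ he)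
      rw [hmin, hmax] at hlt
      exact absurd (lt_of_le_of_lt (s.monotone hpq) hlt) (lt_irrefl _)
    have hIcard : (Finset.univ.filter (fun p : Fin (2 * k) => s p ∈ A)).card = k := by
      have himg : (Finset.univ.filter (fun p : Fin (2 * k) => s p ∈ A)).image ⇑s = A := by
        ext x
        simp only [Finset.mem_image, Finset.mem_filter, Finset.mem_univ, true_and]
        constructor
        · rintro ⟨p, hp, rfl⟩; exact hp
        · intro hx
          obtain ⟨p, rfl⟩ := hsurjS x (Finset.mem_of_mem_filter x hx)
          exact ⟨p, hx, rfl⟩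
      have h2 : ((Finset.univ.filter (fun p : Fin (2 * k) => s p ∈ A)).image ⇑s).card
          = (Finset.univ.filter (fun p : Fin (2 * k) => s p ∈ A)).card :=
        Finset.card_image_of_injective _ s.injective
      rw [himg] at h2
      omega
    intro p
    constructor
    · intro hp
      by_contra hpk
      have hsub : Finset.Iic p ⊆ Finset.univ.filter (fun q : Fin (2 * k) => s q ∈ A) := by
        intro q hq
        rw [Finset.mem_Iic] at hq
        rw [Finset.mem_filter]
        exact ⟨Finset.mem_univ _, hdc q p hq hp⟩
      have := Finset.card_le_card hsub
      rw [Fin.card_Iic, hIcard] at this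
      omega
    · intro hpk
      by_contra hp
      have hsub : Finset.univ.filter (fun q : Fin (2 * k) => s q ∈ A) ⊆ Finset.Iio p := by
        intro q hq
        rw [Finset.mem_filter] at hq
        rw [Finset.mem_Iio]
        by_contra hqp
        push_neg at hqp
        exact hp (hdc p q hqp hq.2)
      have := Finset.card_le_card hsub
      rw [Fin.card_Iio, hIcard] at this
      omega
  -- injectivity facts about finL/finR through s
  have hLL : ∀ i i' : Fin k, s (finL k i) = s (finL k i') → i = i' := by
    intro i i' h
    have := s.injective h
    simp only [finL, Fin.mk.injEq] at this
    exact Fin.ext this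
  have hRR : ∀ j j' : Fin k, s (finR k j) = s (finR k j') → j = j' := by
    intro j j' h
    have := s.injective h
    simp only [finR, Fin.mk.injEq] at this
    exact Fin.ext (by omega)
  have hLRne : ∀ i j : Fin k, s (finL k i) ≠ s (finR k j) := by
    intro i j h
    have := s.injective h
    simp only [finL, finR, Fin.mk.injEq] at this
    have := i.isLt
    omega
  -- every edge has the form {s (finL i), s (finR j)}
  have hpairform : ∀ e ∈ H, ∃ (i : Fin k) (j : Fin k),
      e = {s (finL k i), s (finR k j)} := by
    intro e he
    obtain ⟨a, b, hab, rfl⟩ := hpair e he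
    have haA : a ∈ A := by
      rw [hAdef, Finset.mem_filter]
      refine ⟨(hmemS _).2 ⟨_, he, by simp⟩, _, he, by simp, ?_⟩
      intro y hy
      rcases Finset.mem_insert.1 hy with rfl | hy
      · exact le_refl _
      · rw [Finset.mem_singleton] at hy
        subst hy
        exact le_of_lt hab
    have hbA : b ∉ A := by
      intro hbA
      rw [hAdef, Finset.mem_filter] at hbA
      obtain ⟨-, f, hf, hbf, hble⟩ := hbA
      have hfe : f = {a, b} := huniq b f hf _ he hbf (by simp)
      have : b ≤ a := hble a (by rw [hfe]; simp)
      exact absurd hab (not_lt.2 this)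
    obtain ⟨p, hp⟩ := hsurjS a ((hmemS a).2 ⟨_, he, by simp⟩)
    obtain ⟨q, hq⟩ := hsurjS b ((hmemS b).2 ⟨_, he, by simp⟩)
    have hpk : p.1 < k := (hsplit p).1 (by rw [hp]; exact haA)
    have hqk : ¬ q.1 < k := fun hc => hbA (by rw [← hq]; exact (hsplit q).2 hc)
    refine ⟨⟨p.1, hpk⟩, ⟨q.1 - k, by have := q.isLt; omega⟩, ?_⟩
    have h1 : finL k ⟨p.1, hpk⟩ = p := Fin.ext rfl
    have h2 : finR k ⟨q.1 - k, by have := q.isLt; omega⟩ = q := by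
      apply Fin.ext
      show k + (q.1 - k) = q.1
      omega
    rw [h1, h2, hp, hq]
  -- unique partner for each left endpoint
  have hU2 : ∀ i : Fin k, ∃! j : Fin k,
      ({s (finL k i), s (finR k j)} : Finset (Fin n)) ∈ H := by
    intro i
    have hiA : s (finL k i) ∈ A := (hsplit (finL k i)).2 i.isLt
    rw [hAdef, Finset.mem_filter] at hiA
    obtain ⟨-, e, he, hie, -⟩ := hiA
    obtain ⟨i', j, hform⟩ := hpairform e he
    have hii : i = i' := by
      rw [hform] at hie
      rcases Finset.mem_insert.1 hie with h | h
      · exact hLL _ _ h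
      · rw [Finset.mem_singleton] at h
        exact absurd h (hLRne i j)
    subst hii
    refine ⟨j, ?_, ?_⟩
    · show ({s (finL k i), s (finR k j)} : Finset (Fin n)) ∈ H
      rw [← hform]
      exact he
    intro j' hj'
    have hee : ({s (finL k i), s (finR k j')} : Finset (Fin n)) = e :=
      huniq (s (finL k i)) _ hj' e he (by simp) hie
    rw [hform] at hee
    have : s (finR k j') ∈ ({s (finL k i), s (finR k j)} : Finset (Fin n)) := by
      rw [← hee]; simp
    rcases Finset.mem_insert.1 this with h | h
    · exact absurd h.symm (hLRne i j')
    · rw [Finset.mem_singleton] at h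
      exact hRR _ _ h
  set σ0 : Fin k → Fin k := fun i => Fintype.choose _ (hU2 i) with hσ0
  have hσ0spec : ∀ i : Fin k, ({s (finL k i), s (finR k (σ0 i))} : Finset (Fin n)) ∈ H :=
    fun i => Fintype.choose_spec _ (hU2 i)
  have hσ0inj : Function.Injective σ0 := by
    intro i i' hii
    have he := hσ0spec i
    have he' := hσ0spec i'
    have hee : ({s (finL k i), s (finR k (σ0 i))} : Finset (Fin n))
        = {s (finL k i'), s (finR k (σ0 i'))} :=
      huniq (s (finR k (σ0 i))) _ he _ he' (by simp) (by rw [hii]; simp)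
    have : s (finL k i) ∈ ({s (finL k i'), s (finR k (σ0 i'))} : Finset (Fin n)) := by
      rw [← hee]; simp
    rcases Finset.mem_insert.1 this with h | h
    · exact hLL _ _ h
    · rw [Finset.mem_singleton] at h
      exact absurd h (hLRne _ _)
  set σ : Equiv.Perm (Fin k) :=
    Equiv.ofBijective σ0 (Finite.injective_iff_bijective.1 hσ0inj) with hσ
  have hσapp : ∀ i, σ i = σ0 i := fun i => rfl
  refine ⟨k, S, hS, σ, ?_, rfl⟩
  apply Finset.Subset.antisymm
  · intro e he
    obtain ⟨i, j, rfl⟩ := hpairform e he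
    obtain ⟨j0, hj0, hjuniq⟩ := hU2 i
    have h1 : σ0 i = j0 := hjuniq _ (hσ0spec i)
    have h2 : j = j0 := hjuniq _ he
    rw [mkM]
    apply Finset.mem_image.2
    refine ⟨i, Finset.mem_univ _, ?_⟩
    show ({s (finL k i), s (finR k (σ i))} : Finset (Fin n)) = {s (finL k i), s (finR k j)}
    rw [hσapp, h1, h2]
  · intro e he
    rw [mkM] at he
    obtain ⟨i, -, rfl⟩ := Finset.mem_image.1 he
    exact hσ0spec i

lemma emb_LL {n k : ℕ} (s : Fin (2 * k) ↪o Fin n) {i i' : Fin k}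
    (h : s (finL k i) = s (finL k i')) : i = i' := by
  have := s.injective h
  simp only [finL, Fin.mk.injEq] at this
  exact Fin.ext this

lemma emb_RR {n k : ℕ} (s : Fin (2 * k) ↪o Fin n) {j j' : Fin k}
    (h : s (finR k j) = s (finR k j')) : j = j' := by
  have := s.injective h
  simp only [finR, Fin.mk.injEq] at this
  exact Fin.ext (by omega)

lemma emb_LR {n k : ℕ} (s : Fin (2 * k) ↪o Fin n) (i j : Fin k) :
    s (finL k i) ≠ s (finR k j) := by
  intro h
  have := s.injective h
  simp only [finL, finR, Fin.mk.injEq] at this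
  have := i.isLt
  omega

lemma pairLR_eq {n k : ℕ} (s : Fin (2 * k) ↪o Fin n) {i i' j j' : Fin k}
    (h : ({s (finL k i), s (finR k j)} : Finset (Fin n)) = {s (finL k i'), s (finR k j')}) :
    i = i' ∧ j = j' := by
  have h1 : s (finL k i) ∈ ({s (finL k i'), s (finR k j')} : Finset (Fin n)) := by
    rw [← h]; simp
  have h2 : s (finR k j) ∈ ({s (finL k i'), s (finR k j')} : Finset (Fin n)) := by
    rw [← h]; simp
  constructor
  · rcases Finset.mem_insert.1 h1 with h' | h'
    · exact emb_LL s h'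
    · rw [Finset.mem_singleton] at h'
      exact absurd h' (emb_LR s i j')
  · rcases Finset.mem_insert.1 h2 with h' | h'
    · exact absurd h'.symm (emb_LR s i' j)
    · rw [Finset.mem_singleton] at h'
      exact emb_RR s h'

lemma mkM_card {n k : ℕ} (S : Finset (Fin n)) (hS : S.card = 2 * k) (σ : Equiv.Perm (Fin k)) :
    (mkM k S hS σ).card = k := by
  rw [mkM, Finset.card_image_of_injective _ ?_, Finset.card_univ, Fintype.card_fin]
  intro i i' h
  exact (pairLR_eq (S.orderEmbOfFin hS) h).1

lemma mkM_biUnion {n k : ℕ} (S : Finset (Fin n)) (hS : S.card = 2 * k)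
    (σ : Equiv.Perm (Fin k)) : (mkM k S hS σ).biUnion id = S := by
  ext x
  rw [Finset.mem_biUnion]
  constructor
  · rintro ⟨e, he, hx⟩
    rw [mkM] at he
    obtain ⟨i, -, rfl⟩ := Finset.mem_image.1 he
    rcases Finset.mem_insert.1 hx with rfl | hx
    · exact Finset.orderEmbOfFin_mem S hS _
    · rw [Finset.mem_singleton] at hx
      subst hx
      exact Finset.orderEmbOfFin_mem S hS _
  · intro hx
    have : x ∈ Set.range ⇑(S.orderEmbOfFin hS) := by
      rw [Finset.range_orderEmbOfFin]
      exact hx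
    obtain ⟨p, rfl⟩ := this
    by_cases hp : p.1 < k
    · refine ⟨_, Finset.mem_image.2 ⟨⟨p.1, hp⟩, Finset.mem_univ _, rfl⟩, ?_⟩
      have : finL k ⟨p.1, hp⟩ = p := Fin.ext rfl
      rw [this]
      simp
    · refine ⟨_, Finset.mem_image.2 ⟨σ.symm ⟨p.1 - k, by have := p.isLt; omega⟩,
        Finset.mem_univ _, rfl⟩, ?_⟩
      have h2 : finR k (σ (σ.symm ⟨p.1 - k, by have := p.isLt; omega⟩)) = p := by
        rw [Equiv.apply_symm_apply]
        apply Fin.ext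
        show k + (p.1 - k) = p.1
        omega
      rw [h2]
      simp

lemma mkM_param_inj {n k : ℕ} (S S' : Finset (Fin n)) (hS : S.card = 2 * k)
    (hS' : S'.card = 2 * k) (σ σ' : Equiv.Perm (Fin k))
    (h : mkM k S hS σ = mkM k S' hS' σ') : S = S' ∧ σ = σ' := by
  have hSS : S = S' := by
    rw [← mkM_biUnion S hS σ, ← mkM_biUnion S' hS' σ', h]
  subst hSS
  refine ⟨rfl, ?_⟩
  ext i
  have hmem : ({(S.orderEmbOfFin hS) (finL k i), (S.orderEmbOfFin hS) (finR k (σ i))} :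
      Finset (Fin n)) ∈ mkM k S hS' σ' := by
    rw [← h, mkM]
    exact Finset.mem_image.2 ⟨i, Finset.mem_univ _, rfl⟩
  rw [mkM] at hmem
  obtain ⟨i', -, heq⟩ := Finset.mem_image.1 hmem
  obtain ⟨hii, hjj⟩ := pairLR_eq (S.orderEmbOfFin hS) heq.symm
  rw [hjj, ← hii]

noncomputable def QF (n : ℕ) : Finset (Finset (Finset (Fin n))) :=
  (Finset.range (n / 2 + 1)).biUnion fun k =>
    Finset.univ.image (fun p : {S : Finset (Fin n) // S.card = 2 * k} × Equiv.Perm (Fin k) =>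
      mkM k p.1.1 p.1.2 p.2)

lemma QF_card (n : ℕ) :
    (QF n).card = ∑ k ∈ Finset.range (n / 2 + 1), n.choose (2 * k) * k.factorial := by
  classical
  rw [QF, Finset.card_biUnion]
  · apply Finset.sum_congr rfl
    intro k _
    rw [Finset.card_image_of_injective _ ?_, Finset.card_univ, Fintype.card_prod,
      Fintype.card_finset_len, Fintype.card_perm, Fintype.card_fin, Fintype.card_fin]
    intro p p' hpp
    obtain ⟨h1, h2⟩ := mkM_param_inj _ _ _ _ _ _ hpp
    exact Prod.ext (Subtype.ext h1) h2
  · intro k _ k' _ hkk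
    rw [Function.onFun, Finset.disjoint_left]
    intro H hk hk'
    obtain ⟨p, -, rfl⟩ := Finset.mem_image.1 hk
    obtain ⟨p', -, hp'⟩ := Finset.mem_image.1 hk'
    apply hkk
    rw [← mkM_card p.1.1 p.1.2 p.2, ← hp', mkM_card]

lemma cross_eq_QF (n : ℕ) : Cross n = ↑(QF n) := by
  apply Set.eq_of_subset_of_subset
  · intro H hHc
    obtain ⟨k, S, hS, σ, rfl, hcard⟩ := cross_repr hHc
    have h1 : S.card ≤ n := by simpa using Finset.card_le_univ S
    rw [Finset.mem_coe, QF, Finset.mem_biUnion]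
    exact ⟨k, Finset.mem_range.2 (by omega),
      Finset.mem_image.2 ⟨(⟨S, hS⟩, σ), Finset.mem_univ _, rfl⟩⟩
  · intro H hH
    rw [Finset.mem_coe, QF, Finset.mem_biUnion] at hH
    obtain ⟨k, -, hk⟩ := hH
    obtain ⟨p, -, rfl⟩ := Finset.mem_image.1 hk
    exact mkM_cross p.1.1 p.1.2 p.2

theorem stmt5 (P : ∀ n : ℕ, Set (Finset (Finset (Fin n))))
    -- `P` is a property of ordered hypergraphs: every edge has size at least 2
    (hedge : ∀ n : ℕ, ∀ H ∈ P n, ∀ e ∈ H, 2 ≤ e.card)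
    -- `P` is hereditary
    (hhered : ∀ n : ℕ, ∀ H ∈ P n, ∀ U : Finset (Fin n), inducedSub H U ∈ P U.card)
    -- `H(π) ∈ P` for every permutation `π`
    (hH : ∀ (k : ℕ) (π : Equiv.Perm (Fin k)), Hperm k π ∈ P (2 * k)) :
    (∀ n : ℕ,
      ∑ k ∈ Finset.range (n / 2 + 1), n.choose (2 * k) * k.factorial ≤ (P12 P n).ncard ∧
      (P12 P n).ncard ≤ (P n).ncard) ∧
    (∃! Q : ∀ n : ℕ, Set (Finset (Finset (Fin n))),
      (∀ n : ℕ, ∀ H ∈ Q n, ∀ e ∈ H, 2 ≤ e.card) ∧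
      (∀ n : ℕ, ∀ H ∈ Q n, ∀ U : Finset (Fin n), inducedSub H U ∈ Q U.card) ∧
      (∀ (k : ℕ) (π : Equiv.Perm (Fin k)), Hperm k π ∈ Q (2 * k)) ∧
      (∀ n : ℕ, (Q n).ncard =
        ∑ k ∈ Finset.range (n / 2 + 1), n.choose (2 * k) * k.factorial)) := by
  have cross_in_Q : ∀ (Q : ∀ n : ℕ, Set (Finset (Finset (Fin n)))),
      (∀ n : ℕ, ∀ H ∈ Q n, ∀ U : Finset (Fin n), inducedSub H U ∈ Q U.card) →
      (∀ (k : ℕ) (π : Equiv.Perm (Fin k)), Hperm k π ∈ Q (2 * k)) →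
      ∀ n, Cross n ⊆ Q n := by
    intro Q hh hq n H hHc
    obtain ⟨k, S, hS, σ, rfl, -⟩ := cross_repr hHc
    exact mkM_mem hh hq S hS σ
  have cross_card : ∀ n, (Cross n).ncard
      = ∑ k ∈ Finset.range (n / 2 + 1), n.choose (2 * k) * k.factorial := by
    intro n
    rw [cross_eq_QF, Set.ncard_coe_finset, QF_card]
  constructor
  · intro n
    constructor
    · have hsub : Cross n ⊆ P12 P n := by
        intro H hHc
        refine ⟨cross_in_Q P hhered hH n hHc, ?_, ?_⟩
        · intro v
          apply Finset.card_le_one.2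
          intro e he g hg
          rw [Finset.mem_filter] at he hg
          by_contra hne
          exact Finset.disjoint_left.1 (hHc.2.1 e he.1 g hg.1 hne) he.2 hg.2
        · intro e he
          exact le_of_eq (hHc.1 e he)
      calc ∑ k ∈ Finset.range (n / 2 + 1), n.choose (2 * k) * k.factorial
          = (Cross n).ncard := (cross_card n).symm
        _ ≤ (P12 P n).ncard := Set.ncard_le_ncard hsub (Set.toFinite _)
    · exact Set.ncard_le_ncard (fun H h => h.1) (Set.toFinite _)
  · refine ⟨Cross, ⟨?_, ?_, ?_, ?_⟩, ?_⟩
    · intro n H hHc e he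
      exact le_of_eq (hHc.1 e he).symm
    · intro n H hHc U
      exact cross_hered hHc U
    · exact hperm_cross
    · exact cross_card
    · rintro Q ⟨hq1, hq2, hq3, hq4⟩
      funext n
      have hsub : Cross n ⊆ Q n := cross_in_Q Q hq2 hq3 n
      exact (Set.eq_of_subset_of_ncard_le hsub
        (by rw [hq4, cross_card]) (Set.toFinite _)).symm
end

section
/- Let f : ℕ → ℕ and suppose that for all k, m, n ∈ ℕ, every m×n (0,1)-matrix with at least f(k)·n entries equal to 1, with at most two 1's in each row, and with pairwise distinct rows, contains a member of each class of M(k). Then for every k ∈ ℕ, every k×k permutation matrix M, and every n ∈ ℕ, every n×n (0,1)-matrix with at least f(k)·n entries equal to 1 contains M. -/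
/-- The number of entries of the `(0,1)`-matrix `A` that equal 1. -/
def onesCount {m n : ℕ} (A : Fin m → Fin n → Bool) : ℕ :=
  (Finset.univ.filter fun p : Fin m × Fin n => A p.1 p.2 = true).card

/-- `A` contains a member of each class of `M(k)`. -/
def ContainsMk {m n : ℕ} (k : ℕ) (A : Fin m → Fin n → Bool) : Prop :=
  ∀ σ : Equiv.Perm (Fin k), ∃ r : Fin k → Fin m, ∃ c : Fin (2 * k) → Fin n,
    Function.Injective r ∧ StrictMono c ∧
    ∀ i : Fin k, A (r i) (c (finL k i)) = true ∧ A (r i) (c (finR k (σ i))) = true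

/-- The `(0,1)`-matrix `A` contains the `(0,1)`-matrix `Q`: some submatrix of `A` of the
same dimensions as `Q` has a 1 in every position in which `Q` has a 1. -/
def MContains {m n p q : ℕ} (A : Fin m → Fin n → Bool) (Q : Fin p → Fin q → Bool) : Prop :=
  ∃ ρ : Fin p → Fin m, ∃ γ : Fin q → Fin n, StrictMono ρ ∧ StrictMono γ ∧
    ∀ i j, Q i j = true → A (ρ i) (γ j) = true

/-- The `k × k` permutation matrix of the permutation `σ`. -/
def permMatrix {k : ℕ} (σ : Equiv.Perm (Fin k)) : Fin k → Fin k → Bool :=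
  fun i j => decide (σ i = j)

theorem stmt7 (f : ℕ → ℕ)
    (h : ∀ k m n : ℕ, 1 ≤ n → ∀ A : Fin m → Fin n → Bool,
      f k * n ≤ onesCount A →
      (∀ i : Fin m, (Finset.univ.filter fun j => A i j = true).card ≤ 2) →
      Function.Injective A → ContainsMk k A) :
    ∀ k : ℕ, ∀ σ : Equiv.Perm (Fin k), ∀ n : ℕ, 1 ≤ n → ∀ A : Fin n → Fin n → Bool,
      f k * n ≤ onesCount A → MContains A (permMatrix σ) := by
  intro k σ n hn A hA
  set m := onesCount A with hm
  have hcard : Fintype.card {p : Fin n × Fin n // A p.1 p.2 = true} = m := by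
    rw [Fintype.card_subtype]; rfl
  let e : Fin m ≃ {p : Fin n × Fin n // A p.1 p.2 = true} :=
    (Fintype.equivFinOfCardEq hcard).symm
  let B : Fin m → Fin (2 * n) → Bool := fun r c =>
    decide (c.1 = ((e r).1.2 : ℕ) ∨ c.1 = n + ((e r).1.1 : ℕ))
  -- each row of B has exactly two ones
  have hfil : ∀ r : Fin m, (Finset.univ.filter fun c : Fin (2 * n) => B r c = true) =
      {(⟨((e r).1.2 : ℕ), by have := ((e r).1.2).isLt; omega⟩ : Fin (2 * n)),
       ⟨n + ((e r).1.1 : ℕ), by have := ((e r).1.1).isLt; omega⟩} := by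
    intro r
    ext c
    simp [B, Fin.ext_iff]
  have h2 : ∀ r : Fin m, (Finset.univ.filter fun c : Fin (2 * n) => B r c = true).card = 2 := by
    intro r
    rw [hfil r]
    rw [Finset.card_insert_of_notMem, Finset.card_singleton]
    simp only [Finset.mem_singleton, Fin.ext_iff]
    have := ((e r).1.2).isLt
    omega
  -- total ones count of B
  have hones : onesCount B = 2 * m := by
    have hB1 : onesCount B = Fintype.card {p : Fin m × Fin (2 * n) // B p.1 p.2 = true} := by
      rw [Fintype.card_subtype]; rfl
    have hB2 : Fintype.card {p : Fin m × Fin (2 * n) // B p.1 p.2 = true} =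
        ∑ r : Fin m, Fintype.card {c : Fin (2 * n) // B r c = true} := by
      rw [Fintype.card_congr (Equiv.subtypeProdEquivSigmaSubtype fun a b => B a b = true),
        Fintype.card_sigma]
    have hB3 : ∀ r : Fin m, Fintype.card {c : Fin (2 * n) // B r c = true} = 2 := by
      intro r
      rw [Fintype.card_subtype]
      exact h2 r
    rw [hB1, hB2]
    simp [hB3, Finset.sum_const, mul_comm]
  -- B has pairwise distinct rows
  have hinj : Function.Injective B := by
    intro r r' hrr
    have hJ : ((e r).1.2 : ℕ) = ((e r').1.2 : ℕ) := by
      have h1 : B r ⟨((e r).1.2 : ℕ), by have := ((e r).1.2).isLt; omega⟩ = true := by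
        simp [B]
      rw [hrr] at h1
      simp only [B, decide_eq_true_eq] at h1
      rcases h1 with h1 | h1
      · exact h1
      · have := ((e r).1.2).isLt; omega
    have hI : ((e r).1.1 : ℕ) = ((e r').1.1 : ℕ) := by
      have h1 : B r ⟨n + ((e r).1.1 : ℕ), by have := ((e r).1.1).isLt; omega⟩ = true := by
        simp [B]
      rw [hrr] at h1
      simp only [B, decide_eq_true_eq] at h1
      rcases h1 with h1 | h1
      · have := ((e r').1.2).isLt; omega
      · omega
    have hee : e r = e r' := Subtype.ext (Prod.ext (Fin.ext hI) (Fin.ext hJ))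
    exact e.injective hee
  -- ones bound
  have hge : f k * (2 * n) ≤ onesCount B := by
    rw [hones]
    calc f k * (2 * n) = 2 * (f k * n) := by ring
    _ ≤ 2 * m := Nat.mul_le_mul_left 2 hA
  have hrows : ∀ r : Fin m, (Finset.univ.filter fun c : Fin (2 * n) => B r c = true).card ≤ 2 :=
    fun r => le_of_eq (h2 r)
  obtain ⟨r, c, hrinj, hcmono, hcell⟩ := h k m (2 * n) (by omega) B hge hrows hinj σ⁻¹
  -- decode the structure
  have key : ∀ i : Fin k, (c (finL k i)).1 = ((e (r i)).1.2 : ℕ) ∧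
      (c (finR k (σ⁻¹ i))).1 = n + ((e (r i)).1.1 : ℕ) := by
    intro i
    obtain ⟨hL, hR⟩ := hcell i
    simp only [B, decide_eq_true_eq] at hL hR
    have hlt : c (finL k i) < c (finR k (σ⁻¹ i)) := by
      apply hcmono
      simp only [finL, finR, Fin.mk_lt_mk]
      have := i.isLt
      omega
    rw [Fin.lt_def] at hlt
    have hj := ((e (r i)).1.2).isLt
    rcases hL with hL | hL <;> rcases hR with hR | hR <;> omega
  refine ⟨fun s => (e (r (σ s))).1.1, fun t => (e (r t)).1.2, ?_, ?_, ?_⟩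
  · -- row map strictly monotone
    intro s s' hss
    dsimp only
    have h1 := (key (σ s)).2
    have h2' := (key (σ s')).2
    simp only [Equiv.Perm.inv_def, Equiv.symm_apply_apply] at h1 h2'
    have hc : c (finR k s) < c (finR k s') := by
      apply hcmono
      simp only [finR, Fin.mk_lt_mk]
      exact Nat.add_lt_add_left hss k
    rw [Fin.lt_def] at hc
    rw [Fin.lt_def]
    omega
  · -- column map strictly monotone
    intro t t' htt
    dsimp only
    have h1 := (key t).1
    have h2' := (key t').1
    have hc : c (finL k t) < c (finL k t') := by
      apply hcmono
      simp only [finL, Fin.mk_lt_mk]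
      exact htt
    rw [Fin.lt_def] at hc
    rw [Fin.lt_def]
    omega
  · intro s t hst
    have hts : σ s = t := by simpa [permMatrix] using hst
    subst hts
    exact (e (r (σ s))).2
end

section
/- Let f : ℕ → ℕ and suppose that for every k ∈ ℕ, every k×k permutation matrix M, and every n ∈ ℕ, every n×n (0,1)-matrix with at least f(k)·n entries equal to 1 contains M. Then for all k, m, n ∈ ℕ, every m×n (0,1)-matrix with at least (2f(k+1)+1)·n entries equal to 1, with at most two 1's in each row, and with pairwise distinct rows, contains a member of each class of M(k). -/
set_option maxRecDepth 10000 in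
theorem stmt8 (f : ℕ → ℕ)
    (h : ∀ k : ℕ, ∀ σ : Equiv.Perm (Fin k), ∀ n : ℕ, 1 ≤ n → ∀ A : Fin n → Fin n → Bool,
      f k * n ≤ onesCount A → MContains A (permMatrix σ)) :
    ∀ k m n : ℕ, 1 ≤ n → ∀ A : Fin m → Fin n → Bool,
      (2 * f (k + 1) + 1) * n ≤ onesCount A →
      (∀ i : Fin m, (Finset.univ.filter fun j => A i j = true).card ≤ 2) →
      Function.Injective A → ContainsMk k A := by
  intro k m n hn A hcount hrow hinj
  classical
  set B : Fin n → Fin n → Bool :=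
    fun x y => decide (∃ i, A i y = true ∧ A i x = true ∧ y < x) with hBdef
  -- row one-sets
  set R : Fin m → Finset (Fin n) := fun i => Finset.univ.filter fun j => A i j = true with hRdef
  have hRrow : ∀ i i' : Fin m, R i = R i' → i = i' := by
    intro i i' he
    apply hinj
    funext j
    have : (j ∈ R i) = (j ∈ R i') := by rw [he]
    simp only [hRdef, Finset.mem_filter, Finset.mem_univ, true_and] at this
    rw [Bool.eq_iff_iff]
    constructor <;> intro hj
    · exact this ▸ hj
    · exact this.symm ▸ hj
  -- counting
  have hA : onesCount A = ∑ i : Fin m, (R i).card := by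
    unfold onesCount
    simp only [Finset.card_filter]
    rw [Fintype.sum_prod_type]
    exact Finset.sum_congr rfl fun i _ => (Finset.card_filter _ _).symm
  set T : Finset (Fin m) := Finset.univ.filter fun i => (R i).card = 2 with hTdef
  set S : Finset (Fin m) := Finset.univ.filter fun i => (R i).card = 1 with hSdef
  have hsplit : ∑ i : Fin m, (R i).card ≤ 2 * T.card + S.card := by
    rw [hTdef, hSdef, Finset.card_filter, Finset.card_filter, Finset.mul_sum,
      ← Finset.sum_add_distrib]
    apply Finset.sum_le_sum
    intro i _
    have h2 : (R i).card ≤ 2 := hrow i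
    split_ifs <;> omega
  have hS : S.card ≤ n := by
    have : S.card ≤ (Finset.univ : Finset (Fin n)).card := by
      apply Finset.card_le_card_of_injOn
        (fun i => if h : ∃ a, R i = {a} then h.choose else ⟨0, hn⟩)
      · intro i _; exact Finset.mem_univ _
      · intro i hi i' hi' he
        simp only [hSdef, Finset.mem_coe, Finset.mem_filter] at hi hi'
        have h1 : ∃ a, R i = {a} := Finset.card_eq_one.mp hi.2
        have h2 : ∃ a, R i' = {a} := Finset.card_eq_one.mp hi'.2
        simp only [dif_pos h1, dif_pos h2] at he
        apply hRrow
        rw [h1.choose_spec, h2.choose_spec, he]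
    simpa using this
  have hT : T.card ≤ onesCount B := by
    have key : ∀ i ∈ T, ∃ p : Fin n × Fin n, p.2 < p.1 ∧ R i = {p.2, p.1} := by
      intro i hi
      simp only [hTdef, Finset.mem_filter] at hi
      obtain ⟨a, b, hab, he⟩ := Finset.card_eq_two.mp hi.2
      rcases lt_or_gt_of_ne hab with hlt | hgt
      · exact ⟨(b, a), hlt, he⟩
      · exact ⟨(a, b), hgt, by rw [he, Finset.pair_comm]⟩
    unfold onesCount
    apply Finset.card_le_card_of_injOn
      (fun i => if h : ∃ p : Fin n × Fin n, p.2 < p.1 ∧ R i = {p.2, p.1} then h.choose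
        else (⟨0, hn⟩, ⟨0, hn⟩))
    · intro i hi
      have hp := key i hi
      simp only [dif_pos hp]
      obtain ⟨hlt, he⟩ := hp.choose_spec
      simp only [Finset.mem_coe, Finset.mem_filter, Finset.mem_univ, true_and, hBdef,
        decide_eq_true_eq]
      refine ⟨i, ?_, ?_, hlt⟩
      · have : hp.choose.2 ∈ R i := (Finset.ext_iff.mp he hp.choose.2).mpr (by simp)
        simpa [hRdef] using this
      · have : hp.choose.1 ∈ R i := (Finset.ext_iff.mp he hp.choose.1).mpr (by simp)
        simpa [hRdef] using this
    · intro i hi i' hi' he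
      have h1 := key i hi
      have h2 := key i' hi'
      simp only [dif_pos h1, dif_pos h2] at he
      apply hRrow
      rw [h1.choose_spec.2, h2.choose_spec.2, he]
  have hB : f (k + 1) * n ≤ onesCount B := by
    have h1 : (2 * f (k + 1) + 1) * n = 2 * (f (k + 1) * n) + n := by ring
    rw [hA] at hcount
    omega
  -- apply h to B with the permutation τ
  intro σ
  have hτall : ∃ τ : Equiv.Perm (Fin (k+1)), τ 0 = Fin.last k ∧
      ∀ i : Fin k, τ i.succ = (σ⁻¹ i).castSucc := by
    refine ⟨⟨fun x => Fin.cases (Fin.last k) (fun i' => (σ⁻¹ i').castSucc) x,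
            fun x => Fin.lastCases (0 : Fin (k+1)) (fun i' => (σ i').succ) x, ?_, ?_⟩, ?_, ?_⟩
    · intro x
      induction x using Fin.cases with
      | zero => simp
      | succ i => simp
    · intro x
      induction x using Fin.lastCases with
      | last => simp
      | cast i => simp
    · simp only [Equiv.coe_fn_mk]
      exact Fin.cases_zero
    · intro i
      simp only [Equiv.coe_fn_mk]
      exact Fin.cases_succ _
  obtain ⟨τ, hτ0, hτsucc⟩ := hτall
  obtain ⟨ρ, γ, hρ, hγ, hcont⟩ := h (k + 1) τ n hn B hB
  have hBe : ∀ i : Fin (k + 1), B (ρ i) (γ (τ i)) = true := by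
    intro i
    exact hcont i (τ i) (by simp [permMatrix])
  have hw' : ∀ i : Fin (k + 1), ∃ r : Fin m,
      A r (γ (τ i)) = true ∧ A r (ρ i) = true ∧ γ (τ i) < ρ i := by
    intro i
    have := hBe i
    simpa [hBdef, decide_eq_true_eq] using this
  choose w hw1 hw2 hw3 using hw'
  have hsep : ∀ a b : Fin (k + 1), γ a < ρ b := by
    intro a b
    calc γ a ≤ γ (Fin.last k) := hγ.monotone (Fin.le_last a)
    _ < ρ 0 := by rw [← hτ0]; exact hw3 0
    _ ≤ ρ b := hρ.monotone (Fin.zero_le b)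
  have hwinj : Function.Injective w := by
    intro i i' he
    by_contra hne
    have hsub : ({γ (τ i), ρ i, ρ i'} : Finset (Fin n)) ⊆ R (w i) := by
      intro x hx
      simp only [Finset.mem_insert, Finset.mem_singleton] at hx
      simp only [hRdef, Finset.mem_filter, Finset.mem_univ, true_and]
      rcases hx with rfl | rfl | rfl
      · exact hw1 i
      · exact hw2 i
      · exact he ▸ hw2 i'
    have hne' : ρ i ≠ ρ i' := fun hcon => hne (hρ.injective hcon)
    have hc3 : ({γ (τ i), ρ i, ρ i'} : Finset (Fin n)).card = 3 := by
      rw [Finset.card_insert_of_notMem (by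
          simp only [Finset.mem_insert, Finset.mem_singleton]
          push_neg
          exact ⟨(hsep _ _).ne, (hsep _ _).ne⟩),
        Finset.card_insert_of_notMem (by simp [hne']),
        Finset.card_singleton]
    have := le_trans (Finset.card_le_card hsub) (hrow (w i))
    omega
  refine ⟨fun j => w ((σ j).succ), fun j =>
    if hj : j.1 < k then γ ⟨j.1, Nat.lt_succ_of_lt hj⟩
    else ρ ⟨j.1 - k + 1, by have := j.isLt; omega⟩,
    ?_, ?_, ?_⟩
  · intro j j' he
    have := hwinj he
    have := Fin.succ_injective _ this
    exact σ.injective this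
  · intro a b hab
    have hab' : a.1 < b.1 := hab
    simp only
    split_ifs with ha hb hb
    · exact hγ (Fin.mk_lt_mk.mpr hab')
    · exact hsep _ _
    · omega
    · exact hρ (Fin.mk_lt_mk.mpr (by omega))
  · intro j
    constructor
    · have hj : (finL k j).1 < k := j.isLt
      simp only [dif_pos hj]
      have hτa : τ ((σ j).succ) = Fin.castSucc j := by
        rw [hτsucc, Equiv.Perm.inv_def, Equiv.symm_apply_apply]
      have : (⟨(finL k j).1, Nat.lt_succ_of_lt hj⟩ : Fin (k+1)) = τ ((σ j).succ) := by
        rw [hτa]; ext; simp [finL]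
      rw [this]
      exact hw1 _
    · have hj : ¬ (finR k (σ j)).1 < k := by simp [finR]
      simp only [dif_neg hj]
      have : (⟨(finR k (σ j)).1 - k + 1, by omega⟩ : Fin (k+1)) = (σ j).succ := by
        ext; simp [finR]
      rw [this]
      exact hw2 _
end

section
/- For every k ∈ ℕ there exists a constant C such that for all m, n ∈ ℕ, every m×n (0,1)-matrix with at least C·n entries equal to 1, with at most two 1's in each row, and with pairwise distinct rows, contains a member of each class of M(k). -/
namespace Stmt9Aux

/-- `E` (an ordered graph on `ℕ`, edges as pairs (lo,hi)) contains the ordered matching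
pattern of `σ`. -/
def Pat (k : ℕ) (σ : Equiv.Perm (Fin k)) (E : Finset (ℕ × ℕ)) : Prop :=
  ∃ c : Fin (2 * k) → ℕ, StrictMono c ∧
    ∀ i : Fin k, (c (finL k i), c (finR k (σ i))) ∈ E

lemma patIntro {k : ℕ} (σ : Equiv.Perm (Fin k)) (E : Finset (ℕ × ℕ))
    (L R : Fin k → ℕ) (hL : StrictMono L) (hR : StrictMono R)
    (hLR : ∀ i j, L i < R j) (hmem : ∀ i, (L i, R (σ i)) ∈ E) :
    Pat k σ E := by
  refine ⟨fun a => if h : a.1 < k then L ⟨a.1, h⟩ else R ⟨a.1 - k, by have := a.isLt; omega⟩,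
    ?_, ?_⟩
  · intro a b hab
    replace hab : a.1 < b.1 := hab
    by_cases ha : a.1 < k <;> by_cases hb : b.1 < k
    · simp only [dif_pos ha, dif_pos hb]
      exact hL (show (⟨a.1, ha⟩ : Fin k) < ⟨b.1, hb⟩ from hab)
    · simp only [dif_pos ha, dif_neg hb]
      exact hLR _ _
    · omega
    · simp only [dif_neg ha, dif_neg hb]
      exact hR (show (⟨a.1 - k, _⟩ : Fin k) < ⟨b.1 - k, _⟩ by simp [Fin.lt_def]; omega)
  · intro i
    have h1 : (finL k i).1 < k := i.isLt
    have h2 : ¬ ((finR k (σ i)).1 < k) := by simp [finR]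
    simp only [dif_pos h1, dif_neg h2]
    have e1 : (⟨(finL k i).1, h1⟩ : Fin k) = i := rfl
    have e2 : (⟨(finR k (σ i)).1 - k, by have := (finR k (σ i)).isLt; omega⟩ : Fin k) = σ i := by
      apply Fin.ext; simp [finR]
    rw [e1, e2]
    exact hmem i


lemma finL_lt_finL {k : ℕ} {i j : Fin k} (h : i < j) : finL k i < finL k j := h
lemma finR_lt_finR {k : ℕ} {i j : Fin k} (h : i < j) : finR k i < finR k j := by
  simp only [finR, Fin.lt_def] at *; omega
lemma finL_lt_finR {k : ℕ} (i j : Fin k) : finL k i < finR k j := by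
  simp only [finL, finR, Fin.lt_def]; have := i.isLt; omega

/-- Lifting a pattern in the block-contracted graph back to the graph. -/
lemma patLift {k : ℕ} (σ : Equiv.Perm (Fin k)) (E : Finset (ℕ × ℕ)) (s : ℕ)
    (h : Pat k σ ((E.filter fun e => ¬ (e.1 / s = e.2 / s)).image
      (fun e => (e.1 / s, e.2 / s)))) :
    Pat k σ E := by
  obtain ⟨c, hc, hmem⟩ := h
  have h' : ∀ i : Fin k, ∃ x : ℕ × ℕ, x ∈ E ∧ x.1 / s = c (finL k i) ∧
      x.2 / s = c (finR k (σ i)) := by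
    intro i
    have := hmem i
    simp only [Finset.mem_image, Finset.mem_filter, Prod.mk.injEq] at this
    obtain ⟨x, ⟨hxE, _⟩, hx1, hx2⟩ := this
    exact ⟨x, hxE, hx1, hx2⟩
  choose x hxE h1 h2 using h'
  apply patIntro σ E (fun i => (x i).1) (fun j => (x (σ⁻¹ j)).2)
  · intro i j hij
    apply Nat.lt_of_div_lt_div (c := s)
    rw [h1, h1]
    exact hc (finL_lt_finL hij)
  · intro i j hij
    apply Nat.lt_of_div_lt_div (c := s)
    rw [h2, h2]
    simp only [Equiv.Perm.coe_inv, Equiv.apply_symm_apply]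
    exact hc (finR_lt_finR hij)
  · intro i j
    apply Nat.lt_of_div_lt_div (c := s)
    rw [h1, h2]
    simp only [Equiv.Perm.coe_inv, Equiv.apply_symm_apply]
    exact hc (finL_lt_finR i j)
  · intro i
    have : x (σ⁻¹ (σ i)) = x i := congrArg x (Equiv.symm_apply_apply σ i)
    rw [this]
    exact hxE i

/-- Many right-blocks sharing a common set of `k` left endpoints gives the pattern. -/
lemma patOfWide {k : ℕ} (σ : Equiv.Perm (Fin k)) (E : Finset (ℕ × ℕ)) (s : ℕ)
    (S B : Finset ℕ) (hS : S.card = k) (hB : B.card = k)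
    (hdiv : ∀ v ∈ S, ∀ b' ∈ B, v / s < b')
    (hedge : ∀ v ∈ S, ∀ b' ∈ B, ∃ w, (v, w) ∈ E ∧ w / s = b') :
    Pat k σ E := by
  set vS := S.orderIsoOfFin hS with hvS
  set vB := B.orderIsoOfFin hB with hvB
  have h : ∀ i : Fin k, ∃ w, ((vS i : ℕ), w) ∈ E ∧ w / s = vB (σ i) :=
    fun i => hedge _ (vS i).2 _ (vB (σ i)).2
  choose w hw hws using h
  apply patIntro σ E (fun i => (vS i : ℕ)) (fun j => w (σ⁻¹ j))
  · intro i j hij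
    exact_mod_cast vS.lt_iff_lt.mpr hij
  · intro i j hij
    apply Nat.lt_of_div_lt_div (c := s)
    rw [hws, hws]
    simp only [Equiv.Perm.coe_inv, Equiv.apply_symm_apply]
    exact_mod_cast vB.lt_iff_lt.mpr hij
  · intro i j
    apply Nat.lt_of_div_lt_div (c := s)
    rw [hws]
    simp only [Equiv.Perm.coe_inv, Equiv.apply_symm_apply]
    exact hdiv _ (vS i).2 _ (vB j).2
  · intro i
    have : w (σ⁻¹ (σ i)) = w i := congrArg w (Equiv.symm_apply_apply σ i)
    rw [this]
    exact hw i

/-- Many left-blocks sharing a common set of `k` right endpoints gives the pattern. -/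
lemma patOfTall {k : ℕ} (σ : Equiv.Perm (Fin k)) (E : Finset (ℕ × ℕ)) (s : ℕ)
    (B T : Finset ℕ) (hB : B.card = k) (hT : T.card = k)
    (hdiv : ∀ b ∈ B, ∀ t ∈ T, b < t / s)
    (hedge : ∀ b ∈ B, ∀ t ∈ T, ∃ u, (u, t) ∈ E ∧ u / s = b) :
    Pat k σ E := by
  set vB := B.orderIsoOfFin hB with hvB
  set vT := T.orderIsoOfFin hT with hvT
  have h : ∀ i : Fin k, ∃ u, (u, (vT (σ i) : ℕ)) ∈ E ∧ u / s = vB i :=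
    fun i => hedge _ (vB i).2 _ (vT (σ i)).2
  choose u hu hus using h
  apply patIntro σ E (fun i => u i) (fun j => (vT j : ℕ))
  · intro i j hij
    apply Nat.lt_of_div_lt_div (c := s)
    rw [hus, hus]
    exact_mod_cast vB.lt_iff_lt.mpr hij
  · intro i j hij
    exact_mod_cast vT.lt_iff_lt.mpr hij
  · intro i j
    apply Nat.lt_of_div_lt_div (c := s)
    rw [hus]
    have h1 : (vB i : ℕ) < (vT j : ℕ) / s := hdiv _ (vB i).2 _ (vT j).2
    calc (vB i : ℕ) < (vT j : ℕ) / s := h1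
    _ ≤ _ := le_refl _
  · intro i
    exact hu i


lemma mem_Ico_of_div_eq {s v b : ℕ} (hs : 0 < s) (h : v / s = b) :
    v ∈ Finset.Ico (b * s) (b * s + s) := by
  subst h
  simp only [Finset.mem_Ico]
  refine ⟨Nat.div_mul_le_self v s, ?_⟩
  have h1 := Nat.div_add_mod v s
  have h2 := Nat.mod_lt v hs
  nlinarith

lemma div_eq_of_mem_Ico {s v b : ℕ} (h : v ∈ Finset.Ico (b * s) (b * s + s)) :
    v / s = b := by
  simp only [Finset.mem_Ico] at h
  exact Nat.div_eq_of_lt_le (by linarith [h.1]) (by rw [add_one_mul]; omega)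

/-- For a fixed left block `b`, the number of right blocks `b'` such that edges from
block `b` to block `b'` use at least `k` distinct left endpoints is less than
`(k-1) * (s.choose k) + 1`, provided `E` avoids the pattern. -/
lemma wideCount {k : ℕ} {s : ℕ} (hs : 0 < s) (σ : Equiv.Perm (Fin k))
    (E : Finset (ℕ × ℕ)) (hnp : ¬ Pat k σ E) (b : ℕ) (W : Finset ℕ)
    (hW : ∀ b' ∈ W, b < b' ∧
      k ≤ ((E.filter fun e => e.1 / s = b ∧ e.2 / s = b').image Prod.fst).card) :
    W.card ≤ (k - 1) * s.choose k := by
  by_contra hcon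
  push_neg at hcon
  have hsub : ∀ b' : ℕ, ∃ t : Finset ℕ, b' ∈ W →
      t ⊆ (E.filter fun e => e.1 / s = b ∧ e.2 / s = b').image Prod.fst ∧ t.card = k := by
    intro b'
    by_cases hb' : b' ∈ W
    · obtain ⟨t, ht1, ht2⟩ := Finset.exists_subset_card_eq (hW b' hb').2
      exact ⟨t, fun _ => ⟨ht1, ht2⟩⟩
    · exact ⟨∅, fun h => absurd h hb'⟩
  choose S hS using hsub
  have hmaps : ∀ b' ∈ W, S b' ∈ (Finset.Ico (b * s) (b * s + s)).powersetCard k := by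
    intro b' hb'
    rw [Finset.mem_powersetCard]
    refine ⟨?_, (hS b' hb').2⟩
    intro v hv
    have := (hS b' hb').1 hv
    simp only [Finset.mem_image, Finset.mem_filter] at this
    obtain ⟨e, ⟨heE, he1, he2⟩, hev⟩ := this
    exact mem_Ico_of_div_eq hs (by rw [hev] at he1; exact he1)
  have hcard : ((Finset.Ico (b * s) (b * s + s)).powersetCard k).card * (k - 1) < W.card := by
    rw [Finset.card_powersetCard, Nat.card_Ico]
    simp only [Nat.add_sub_cancel_left]
    calc s.choose k * (k - 1) = (k - 1) * s.choose k := mul_comm _ _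
    _ < W.card := hcon
  obtain ⟨S₀, hS₀, hfib⟩ := Finset.exists_lt_card_fiber_of_mul_lt_card_of_maps_to hmaps hcard
  have hk9 : k ≤ (W.filter fun b' => S b' = S₀).card := by omega
  obtain ⟨B, hBsub, hBcard⟩ := Finset.exists_subset_card_eq hk9
  apply hnp
  rw [Finset.mem_powersetCard] at hS₀
  apply patOfWide σ E s S₀ B hS₀.2 hBcard
  · intro v hv b' hb'
    have hvb : v / s = b := div_eq_of_mem_Ico (hS₀.1 hv)
    have := hBsub hb'
    rw [Finset.mem_filter] at this
    rw [hvb]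
    exact (hW b' this.1).1
  · intro v hv b' hb'
    have hmem := hBsub hb'
    rw [Finset.mem_filter] at hmem
    have hvS : v ∈ S b' := by rw [hmem.2]; exact hv
    have := (hS b' hmem.1).1 hvS
    simp only [Finset.mem_image, Finset.mem_filter] at this
    obtain ⟨e, ⟨heE, he1, he2⟩, hev⟩ := this
    refine ⟨e.2, ?_, he2⟩
    rw [← hev]
    simpa using heE

/-- For a fixed right block `b'`, the number of left blocks `b` such that edges from
block `b` to block `b'` use at least `k` distinct right endpoints is bounded. -/
lemma tallCount {k : ℕ} {s : ℕ} (hs : 0 < s) (σ : Equiv.Perm (Fin k))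
    (E : Finset (ℕ × ℕ)) (hnp : ¬ Pat k σ E) (b' : ℕ) (W : Finset ℕ)
    (hW : ∀ b ∈ W, b < b' ∧
      k ≤ ((E.filter fun e => e.1 / s = b ∧ e.2 / s = b').image Prod.snd).card) :
    W.card ≤ (k - 1) * s.choose k := by
  by_contra hcon
  push_neg at hcon
  have hsub : ∀ b : ℕ, ∃ t : Finset ℕ, b ∈ W →
      t ⊆ (E.filter fun e => e.1 / s = b ∧ e.2 / s = b').image Prod.snd ∧ t.card = k := by
    intro b
    by_cases hb : b ∈ W
    · obtain ⟨t, ht1, ht2⟩ := Finset.exists_subset_card_eq (hW b hb).2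
      exact ⟨t, fun _ => ⟨ht1, ht2⟩⟩
    · exact ⟨∅, fun h => absurd h hb⟩
  choose T hT using hsub
  have hmaps : ∀ b ∈ W, T b ∈ (Finset.Ico (b' * s) (b' * s + s)).powersetCard k := by
    intro b hb
    rw [Finset.mem_powersetCard]
    refine ⟨?_, (hT b hb).2⟩
    intro v hv
    have := (hT b hb).1 hv
    simp only [Finset.mem_image, Finset.mem_filter] at this
    obtain ⟨e, ⟨heE, he1, he2⟩, hev⟩ := this
    exact mem_Ico_of_div_eq hs (by rw [hev] at he2; exact he2)
  have hcard : ((Finset.Ico (b' * s) (b' * s + s)).powersetCard k).card * (k - 1) < W.card := by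
    rw [Finset.card_powersetCard, Nat.card_Ico]
    simp only [Nat.add_sub_cancel_left]
    calc s.choose k * (k - 1) = (k - 1) * s.choose k := mul_comm _ _
    _ < W.card := hcon
  obtain ⟨T₀, hT₀, hfib⟩ := Finset.exists_lt_card_fiber_of_mul_lt_card_of_maps_to hmaps hcard
  have hk9 : k ≤ (W.filter fun b => T b = T₀).card := by omega
  obtain ⟨B, hBsub, hBcard⟩ := Finset.exists_subset_card_eq hk9
  apply hnp
  rw [Finset.mem_powersetCard] at hT₀
  apply patOfTall σ E s B T₀ hBcard hT₀.2
  · intro bb hbb t ht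
    have htb : t / s = b' := div_eq_of_mem_Ico (hT₀.1 ht)
    have := hBsub hbb
    rw [Finset.mem_filter] at this
    rw [htb]
    exact (hW bb this.1).1
  · intro bb hbb t ht
    have hmem := hBsub hbb
    rw [Finset.mem_filter] at hmem
    have hvT : t ∈ T bb := by rw [hmem.2]; exact ht
    have := (hT bb hmem.1).1 hvT
    simp only [Finset.mem_image, Finset.mem_filter] at this
    obtain ⟨e, ⟨heE, he1, he2⟩, hev⟩ := this
    refine ⟨e.1, ?_, he1⟩
    rw [← hev]
    simpa using heE


lemma filter_bm_eq (s : ℕ) (E : Finset (ℕ × ℕ)) (b b' : ℕ) :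
    (E.filter fun e => (e.1 / s, e.2 / s) = (b, b')) =
      E.filter fun e => e.1 / s = b ∧ e.2 / s = b' := by
  apply Finset.filter_congr
  intro e _
  simp [Prod.ext_iff]

set_option maxHeartbeats 3000000 in
lemma main {k : ℕ} (hk : 1 ≤ k) :
    ∃ c : ℕ, ∀ (σ : Equiv.Perm (Fin k)) (n : ℕ) (E : Finset (ℕ × ℕ)),
      (∀ e ∈ E, e.1 < e.2 ∧ e.2 < n) → ¬ Pat k σ E → E.card ≤ c * n := by
  obtain ⟨a, rfl⟩ : ∃ a, k = a + 1 := ⟨k - 1, by omega⟩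
  clear hk
  set s : ℕ := 2 * (a + 1) ^ 2 with hs_def
  have hs : 0 < s := by positivity
  set Ch : ℕ := s.choose (a + 1) with hCh_def
  set D : ℕ := s * s * (1 + 2 * a * Ch) with hD_def
  set c : ℕ := 4 * D * (1 + (a + 1) ^ 4) with hc_def
  have hDge : s * s ≤ D := by
    rw [hD_def]; nlinarith [Nat.zero_le (2 * a * Ch)]
  refine ⟨c, ?_⟩
  intro σ n
  induction n using Nat.strong_induction_on with
  | _ n IH =>
  intro E hE hnp
  by_cases hsmall : n ≤ 4 * (a + 1) ^ 4
  · -- small case : E.card ≤ n * n ≤ c * n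
    have h1 : E ⊆ (Finset.range n) ×ˢ (Finset.range n) := by
      intro e he
      have := hE e he
      rw [Finset.mem_product, Finset.mem_range, Finset.mem_range]
      omega
    have h2 : E.card ≤ n * n := by
      calc E.card ≤ ((Finset.range n) ×ˢ (Finset.range n)).card := Finset.card_le_card h1
      _ = n * n := by rw [Finset.card_product, Finset.card_range]
    have h3 : n ≤ c := by
      have : 4 * ((2 * (a+1)^2) * (2 * (a+1)^2)) ≤ 4 * D * 1 := by
        simpa using Nat.mul_le_mul_left 4 hDge
      calc n ≤ 4 * (a + 1) ^ 4 := hsmall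
      _ ≤ 4 * D * (1 + (a+1)^4) := by nlinarith [Nat.zero_le D, hDge]
      _ = c := by rw [hc_def]
    calc E.card ≤ n * n := h2
    _ ≤ c * n := Nat.mul_le_mul_right n h3
  · push_neg at hsmall
    -- big case
    set bm : ℕ × ℕ → ℕ × ℕ := fun e => (e.1 / s, e.2 / s) with hbm_def
    set N : ℕ := n / s + 1 with hN_def
    set P : Finset (ℕ × ℕ) := E.image bm with hP_def
    set F : ℕ × ℕ → Finset (ℕ × ℕ) := fun p => E.filter fun e => bm e = p with hF_def
    set f : ℕ × ℕ → ℕ := fun p => (F p).card with hf_def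
    -- basic facts about members of P
    have hPfacts : ∀ p ∈ P, p.1 ≤ p.2 ∧ p.1 < N ∧ p.2 < N := by
      intro p hp
      rw [hP_def, Finset.mem_image] at hp
      obtain ⟨e, he, rfl⟩ := hp
      simp only [hbm_def]
      have h1 := (hE e he).1
      have h2 := (hE e he).2
      refine ⟨Nat.div_le_div_right (Nat.le_of_lt h1), ?_, ?_⟩
      · have : e.1 / s ≤ n / s := Nat.div_le_div_right (by omega)
        omega
      · have : e.2 / s ≤ n / s := Nat.div_le_div_right (by omega)
        omega
    have hsum : E.card = ∑ p ∈ P, f p :=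
      Finset.card_eq_sum_card_fiberwise (fun e he => Finset.mem_image_of_mem bm he)
    -- fiber bounds
    have hfib_le : ∀ p : ℕ × ℕ, f p ≤ s * s := by
      intro p
      have hsub : F p ⊆ (Finset.Ico (p.1 * s) (p.1 * s + s)) ×ˢ
          (Finset.Ico (p.2 * s) (p.2 * s + s)) := by
        intro e he
        rw [hF_def, Finset.mem_filter] at he
        have he2 : e.1 / s = p.1 ∧ e.2 / s = p.2 := by
          have := he.2
          rw [hbm_def] at this
          exact ⟨congrArg Prod.fst this, congrArg Prod.snd this⟩
        rw [Finset.mem_product]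
        exact ⟨mem_Ico_of_div_eq hs he2.1, mem_Ico_of_div_eq hs he2.2⟩
      calc f p ≤ _ := Finset.card_le_card hsub
      _ ≤ s * s := by
        rw [Finset.card_product, Nat.card_Ico, Nat.card_Ico]
        simp
    classical
    -- the four classes of block pairs
    set wide : ℕ × ℕ → Prop := fun p => a + 1 ≤ ((F p).image Prod.fst).card with hwide_def
    set tall : ℕ × ℕ → Prop := fun p => a + 1 ≤ ((F p).image Prod.snd).card with htall_def
    set P1 : Finset (ℕ × ℕ) := P.filter (fun p => p.1 = p.2) with hP1_def
    set Pn : Finset (ℕ × ℕ) := P.filter (fun p => ¬ p.1 = p.2) with hPn_def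
    set P2 : Finset (ℕ × ℕ) := Pn.filter wide with hP2_def
    set Pm : Finset (ℕ × ℕ) := Pn.filter (fun p => ¬ wide p) with hPm_def
    set P3 : Finset (ℕ × ℕ) := Pm.filter tall with hP3_def
    set P4 : Finset (ℕ × ℕ) := Pm.filter (fun p => ¬ tall p) with hP4_def
    have hsplit1 : ∑ p ∈ P1, f p + ∑ p ∈ Pn, f p = ∑ p ∈ P, f p :=
      Finset.sum_filter_add_sum_filter_not P _ f
    have hsplit2 : ∑ p ∈ P2, f p + ∑ p ∈ Pm, f p = ∑ p ∈ Pn, f p :=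
      Finset.sum_filter_add_sum_filter_not Pn _ f
    have hsplit3 : ∑ p ∈ P3, f p + ∑ p ∈ P4, f p = ∑ p ∈ Pm, f p :=
      Finset.sum_filter_add_sum_filter_not Pm _ f
    -- Bound on P1
    have hP1card : P1.card ≤ N := by
      have := Finset.card_range N
      rw [← this]
      apply Finset.card_le_card_of_injOn Prod.fst (t := Finset.range N)
      · intro p hp
        simp only [Finset.mem_coe, hP1_def, Finset.mem_filter] at hp
        rw [Finset.mem_coe, Finset.mem_range]
        exact (hPfacts p hp.1).2.1
      · intro p hp q hq hpq
        have hp' := Finset.mem_filter.mp (Finset.mem_coe.mp hp)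
        have hq' := Finset.mem_filter.mp (Finset.mem_coe.mp hq)
        exact Prod.ext_iff.mpr ⟨hpq, by rw [← hp'.2, ← hq'.2, hpq]⟩
    have hP1sum : ∑ p ∈ P1, f p ≤ N * (s * s) := by
      calc ∑ p ∈ P1, f p ≤ P1.card • (s * s) :=
        Finset.sum_le_card_nsmul P1 f (s * s) (fun p _ => hfib_le p)
      _ = P1.card * (s * s) := by rw [smul_eq_mul]
      _ ≤ N * (s * s) := Nat.mul_le_mul_right _ hP1card
    -- Bound on P2 (wide pairs)
    have hP2card : P2.card ≤ N * (a * Ch) := by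
      have hmap : ∀ p ∈ P2, p.1 ∈ Finset.range N := by
        intro p hp
        rw [hP2_def, Finset.mem_filter, hPn_def, Finset.mem_filter] at hp
        rw [Finset.mem_range]
        exact (hPfacts p hp.1.1).2.1
      rw [Finset.card_eq_sum_card_fiberwise hmap]
      have hb : ∀ b ∈ Finset.range N, (P2.filter fun p => p.1 = b).card ≤ a * Ch := by
        intro b _
        have hQcard : (P2.filter fun p => p.1 = b).card =
            ((P2.filter fun p => p.1 = b).image Prod.snd).card := by
          rw [Finset.card_image_of_injOn]
          intro p hp q hq hpq
          have hp' := Finset.mem_filter.mp (Finset.mem_coe.mp hp)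
          have hq' := Finset.mem_filter.mp (Finset.mem_coe.mp hq)
          exact Prod.ext_iff.mpr ⟨by rw [hp'.2, hq'.2], hpq⟩
        rw [hQcard]
        have hW : ∀ b' ∈ (P2.filter fun p => p.1 = b).image Prod.snd, b < b' ∧
            (a+1) ≤ ((E.filter fun e => e.1 / s = b ∧ e.2 / s = b').image Prod.fst).card := by
          intro b' hb'
          rw [Finset.mem_image] at hb'
          obtain ⟨⟨p1, p2⟩, hpQ, rfl⟩ := hb'
          have h1 := Finset.mem_filter.mp hpQ
          have h2 := Finset.mem_filter.mp h1.1
          have h3 := Finset.mem_filter.mp h2.1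
          have hble : p1 ≤ p2 := (hPfacts _ h3.1).1
          have hne : ¬ p1 = p2 := h3.2
          have hb1 : p1 = b := h1.2
          subst hb1
          refine ⟨by omega, ?_⟩
          have hw := h2.2
          rw [hwide_def] at hw
          have hFeq : F (p1, p2) = E.filter fun e => e.1 / s = p1 ∧ e.2 / s = p2 := by
            rw [hF_def]
            simp only [hbm_def]
            exact filter_bm_eq s E p1 p2
          rw [hFeq] at hw
          exact hw
        have := wideCount hs σ E hnp b ((P2.filter fun p => p.1 = b).image Prod.snd) hW
        simpa using this
      calc ∑ b ∈ Finset.range N, (P2.filter fun p => p.1 = b).card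
          ≤ ∑ _b ∈ Finset.range N, a * Ch := Finset.sum_le_sum hb
        _ = N * (a * Ch) := by rw [Finset.sum_const, Finset.card_range, smul_eq_mul]
    have hP2sum : ∑ p ∈ P2, f p ≤ (N * (a * Ch)) * (s * s) := by
      calc ∑ p ∈ P2, f p ≤ P2.card • (s * s) :=
        Finset.sum_le_card_nsmul P2 f (s * s) (fun p _ => hfib_le p)
      _ = P2.card * (s * s) := by rw [smul_eq_mul]
      _ ≤ _ := Nat.mul_le_mul_right _ hP2card
    -- Bound on P3 (tall pairs)
    have hP3card : P3.card ≤ N * (a * Ch) := by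
      have hmap : ∀ p ∈ P3, p.2 ∈ Finset.range N := by
        intro p hp
        rw [hP3_def, Finset.mem_filter, hPm_def, Finset.mem_filter, hPn_def,
          Finset.mem_filter] at hp
        rw [Finset.mem_range]
        exact (hPfacts p hp.1.1.1).2.2
      rw [Finset.card_eq_sum_card_fiberwise hmap]
      have hb : ∀ b' ∈ Finset.range N, (P3.filter fun p => p.2 = b').card ≤ a * Ch := by
        intro b' _
        have hQcard : (P3.filter fun p => p.2 = b').card =
            ((P3.filter fun p => p.2 = b').image Prod.fst).card := by
          rw [Finset.card_image_of_injOn]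
          intro p hp q hq hpq
          have hp' := Finset.mem_filter.mp (Finset.mem_coe.mp hp)
          have hq' := Finset.mem_filter.mp (Finset.mem_coe.mp hq)
          exact Prod.ext_iff.mpr ⟨hpq, by rw [hp'.2, hq'.2]⟩
        rw [hQcard]
        have hW : ∀ b ∈ (P3.filter fun p => p.2 = b').image Prod.fst, b < b' ∧
            (a+1) ≤ ((E.filter fun e => e.1 / s = b ∧ e.2 / s = b').image Prod.snd).card := by
          intro b hb
          rw [Finset.mem_image] at hb
          obtain ⟨⟨p1, p2⟩, hpQ, rfl⟩ := hb
          have h1 := Finset.mem_filter.mp hpQ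
          have h2 := Finset.mem_filter.mp h1.1
          have h3 := Finset.mem_filter.mp h2.1
          have h4 := Finset.mem_filter.mp h3.1
          have hble : p1 ≤ p2 := (hPfacts _ h4.1).1
          have hne : ¬ p1 = p2 := h4.2
          have hb2 : p2 = b' := h1.2
          subst hb2
          refine ⟨by omega, ?_⟩
          have ht := h2.2
          rw [htall_def] at ht
          have hFeq : F (p1, p2) = E.filter fun e => e.1 / s = p1 ∧ e.2 / s = p2 := by
            rw [hF_def]
            simp only [hbm_def]
            exact filter_bm_eq s E p1 p2
          rw [hFeq] at ht
          exact ht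
        have := tallCount hs σ E hnp b' ((P3.filter fun p => p.2 = b').image Prod.fst) hW
        simpa using this
      calc ∑ b ∈ Finset.range N, (P3.filter fun p => p.2 = b).card
          ≤ ∑ _b ∈ Finset.range N, a * Ch := Finset.sum_le_sum hb
        _ = N * (a * Ch) := by rw [Finset.sum_const, Finset.card_range, smul_eq_mul]
    have hP3sum : ∑ p ∈ P3, f p ≤ (N * (a * Ch)) * (s * s) := by
      calc ∑ p ∈ P3, f p ≤ P3.card • (s * s) :=
        Finset.sum_le_card_nsmul P3 f (s * s) (fun p _ => hfib_le p)
      _ = P3.card * (s * s) := by rw [smul_eq_mul]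
      _ ≤ _ := Nat.mul_le_mul_right _ hP3card
    -- Bound on P4 via the contracted graph and induction
    have hNlt : N < n := by
      have hs2 : 2 ≤ s := by rw [hs_def]; nlinarith
      have h2 : n / s ≤ n / 2 := Nat.div_le_div_left hs2 (by norm_num)
      have h5 : 1 ≤ (a+1)^4 := Nat.one_le_pow _ _ (by omega)
      omega
    have hIH : ((E.filter fun e => ¬ (e.1 / s = e.2 / s)).image bm).card ≤ c * N := by
      apply IH N hNlt
      · intro q hq
        rw [Finset.mem_image] at hq
        obtain ⟨e, he, rfl⟩ := hq
        rw [Finset.mem_filter] at he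
        have h1 := (hE e he.1).1
        have h2 := (hE e he.1).2
        have hle : e.1 / s ≤ e.2 / s := Nat.div_le_div_right (Nat.le_of_lt h1)
        have hlt : e.2 / s ≤ n / s := Nat.div_le_div_right (by omega)
        simp only [hbm_def]
        refine ⟨by omega, by omega⟩
      · intro hpat
        apply hnp
        apply patLift σ E s
        simpa only [hbm_def] using hpat
    have hP4sub : P4 ⊆ (E.filter fun e => ¬ (e.1 / s = e.2 / s)).image bm := by
      intro p hp
      rw [hP4_def, Finset.mem_filter, hPm_def, Finset.mem_filter, hPn_def,
        Finset.mem_filter] at hp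
      obtain ⟨⟨⟨hpP, hpne⟩, -⟩, -⟩ := hp
      rw [hP_def, Finset.mem_image] at hpP
      obtain ⟨e, he, rfl⟩ := hpP
      rw [Finset.mem_image]
      refine ⟨e, ?_, rfl⟩
      rw [Finset.mem_filter]
      refine ⟨he, ?_⟩
      intro hdd
      apply hpne
      simp only [hbm_def]
      exact hdd
    have hP4sum : ∑ p ∈ P4, f p ≤ (c * N) * (a * a) := by
      have hfp : ∀ p ∈ P4, f p ≤ a * a := by
        intro p hp
        rw [hP4_def, Finset.mem_filter, hPm_def, Finset.mem_filter] at hp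
        obtain ⟨⟨-, hnw⟩, hnt⟩ := hp
        rw [hwide_def] at hnw
        rw [htall_def] at hnt
        have hl : ((F p).image Prod.fst).card ≤ a := by omega
        have hr : ((F p).image Prod.snd).card ≤ a := by omega
        have hsub : F p ⊆ ((F p).image Prod.fst) ×ˢ ((F p).image Prod.snd) := by
          intro e he
          rw [Finset.mem_product]
          exact ⟨Finset.mem_image_of_mem _ he, Finset.mem_image_of_mem _ he⟩
        calc f p ≤ _ := Finset.card_le_card hsub
        _ = _ := Finset.card_product _ _
        _ ≤ a * a := Nat.mul_le_mul hl hr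
      calc ∑ p ∈ P4, f p ≤ P4.card • (a * a) := Finset.sum_le_card_nsmul P4 f (a * a) hfp
      _ = P4.card * (a * a) := by rw [smul_eq_mul]
      _ ≤ (c * N) * (a * a) :=
        Nat.mul_le_mul_right _ (le_trans (Finset.card_le_card hP4sub) hIH)
    -- assemble
    have hbig : E.card ≤ N * (s*s) + ((N * (a * Ch)) * (s*s) +
        ((N * (a * Ch)) * (s*s) + (c * N) * (a * a))) := by
      rw [hsum, ← hsplit1, ← hsplit2, ← hsplit3]
      exact add_le_add hP1sum (add_le_add hP2sum (add_le_add hP3sum hP4sum))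
    have h4 : 4 * (a+1)^2 * N ≤ 3 * n := by
      have h0 : n / s * s ≤ n := Nat.div_mul_le_self n s
      have hk2 : 2 * s ≤ n := by
        have hpow : (a+1)^2 ≤ (a+1)^4 := Nat.pow_le_pow_right (by omega) (by omega)
        rw [hs_def]
        omega
      have h2s : 4 * (a+1)^2 = 2 * s := by rw [hs_def]; ring
      rw [h2s, hN_def]
      nlinarith [h0, hk2]
    have hkey : 3 * D + 3 * c * (a * a) ≤ 4 * (a+1)^2 * c := by
      have h1 : 3 * c * (a*a) ≤ 3 * (a+1)^2 * c := by
        have haa : a*a ≤ (a+1)^2 := by nlinarith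
        calc 3*c*(a*a) = 3*c*(a*a) := rfl
        _ ≤ 3*c*((a+1)^2) := Nat.mul_le_mul_left _ haa
        _ = 3*(a+1)^2*c := by ring
      have h2 : 3 * D ≤ (a+1)^2 * c := by
        calc 3*D ≤ 4*D := by omega
        _ ≤ 4*D*(1+(a+1)^4) := Nat.le_mul_of_pos_right _ (by positivity)
        _ = c := hc_def.symm
        _ ≤ (a+1)^2 * c := Nat.le_mul_of_pos_left _ (by positivity)
      calc 3*D + 3*c*(a*a) ≤ (a+1)^2*c + 3*(a+1)^2*c := add_le_add h2 h1
      _ = 4*(a+1)^2*c := by ring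
    have hfinal : N * (s*s) + ((N * (a * Ch)) * (s*s) +
        ((N * (a * Ch)) * (s*s) + (c * N) * (a * a))) ≤ c * n := by
      have hpos : 0 < 4 * (a+1)^2 := by positivity
      refine Nat.le_of_mul_le_mul_left ?_ hpos
      calc 4*(a+1)^2 * (N * (s*s) + ((N * (a * Ch)) * (s*s) +
            ((N * (a * Ch)) * (s*s) + (c * N) * (a * a))))
          = (4*(a+1)^2*N) * (D + c*(a*a)) := by rw [hD_def]; ring
        _ ≤ (3*n) * (D + c*(a*a)) := Nat.mul_le_mul_right _ h4
        _ = n * (3*D + 3*c*(a*a)) := by ring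
        _ ≤ n * (4*(a+1)^2*c) := Nat.mul_le_mul_left _ hkey
        _ = 4*(a+1)^2 * (c*n) := by ring
    exact le_trans hbig hfinal


end Stmt9Aux

open Stmt9Aux in
set_option maxHeartbeats 1600000 in
theorem stmt9 (k : ℕ) :
    ∃ C : ℕ, ∀ m n : ℕ, 1 ≤ n → ∀ A : Fin m → Fin n → Bool,
      C * n ≤ onesCount A →
      (∀ i : Fin m, (Finset.univ.filter fun j => A i j = true).card ≤ 2) →
      Function.Injective A → ContainsMk k A := by
  classical
  rcases Nat.eq_zero_or_pos k with hk0 | hk1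
  · subst hk0
    refine ⟨0, fun m n hn A h1 h2 h3 σ => ⟨fun i => i.elim0, fun a => a.elim0, ?_, ?_, ?_⟩⟩
    · intro i; exact i.elim0
    · intro i; exact i.elim0
    · intro i; exact i.elim0
  · obtain ⟨c, hc⟩ := Stmt9Aux.main hk1
    refine ⟨2 * c + 2, ?_⟩
    intro m n hn A hones h2 hA
    rw [ContainsMk]
    -- the edge set of the graph defined by the rows with two ones
    set E : Finset (ℕ × ℕ) := ((Finset.univ : Finset (Fin n × Fin n)).filter fun e =>
      e.1.1 < e.2.1 ∧ ∃ i, A i e.1 = true ∧ A i e.2 = true).image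
      (fun e => (e.1.1, e.2.1)) with hE_def
    have hEcond : ∀ x ∈ E, x.1 < x.2 ∧ x.2 < n := by
      intro x hx
      rw [hE_def, Finset.mem_image] at hx
      obtain ⟨e, he, rfl⟩ := hx
      rw [Finset.mem_filter] at he
      exact ⟨he.2.1, e.2.isLt⟩
    -- counting: onesCount A ≤ 2 * E.card + n
    set rc : Fin m → ℕ := fun i => (Finset.univ.filter fun j => A i j = true).card with hrc_def
    have hsum : onesCount A = ∑ i : Fin m,
        ((Finset.univ.filter fun p : Fin m × Fin n => A p.1 p.2 = true).filter
          fun p => p.1 = i).card :=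
      Finset.card_eq_sum_card_fiberwise (fun p _ => Finset.mem_univ _)
    have hfib : ∀ i : Fin m,
        ((Finset.univ.filter fun p : Fin m × Fin n => A p.1 p.2 = true).filter
          fun p => p.1 = i).card = rc i := by
      intro i
      apply Finset.card_bij (fun p _ => p.2)
      · intro p hp
        rw [Finset.mem_filter, Finset.mem_filter] at hp
        obtain ⟨⟨-, hp1⟩, hp2⟩ := hp
        rw [Finset.mem_filter]
        exact ⟨Finset.mem_univ _, by rw [← hp2]; exact hp1⟩
      · intro p hp q hq hpq
        rw [Finset.mem_filter] at hp hq
        exact Prod.ext_iff.mpr ⟨hp.2.trans hq.2.symm, hpq⟩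
      · intro j hj
        rw [Finset.mem_filter] at hj
        refine ⟨(i, j), ?_, rfl⟩
        rw [Finset.mem_filter, Finset.mem_filter]
        exact ⟨⟨Finset.mem_univ _, hj.2⟩, rfl⟩
    -- rows with exactly one 1
    have hone : ∀ i : Fin m, ∃ a : Fin n, rc i = 1 →
        (Finset.univ.filter fun j => A i j = true) = {a} := by
      intro i
      by_cases h : rc i = 1
      · obtain ⟨a, ha⟩ := Finset.card_eq_one.mp h
        exact ⟨a, fun _ => ha⟩
      · exact ⟨⟨0, hn⟩, fun hh => absurd hh h⟩
    choose g1 hg1 using hone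
    have hR1 : (Finset.univ.filter fun i : Fin m => rc i = 1).card ≤ n := by
      have := Finset.card_range n
      calc (Finset.univ.filter fun i : Fin m => rc i = 1).card
          ≤ (Finset.univ : Finset (Fin n)).card := ?_
        _ = n := Finset.card_univ.trans (Fintype.card_fin n)
      apply Finset.card_le_card_of_injOn g1 (fun _ _ => Finset.mem_univ _)
      intro i hi j hj hij
      have hi' := (Finset.mem_filter.mp (Finset.mem_coe.mp hi)).2
      have hj' := (Finset.mem_filter.mp (Finset.mem_coe.mp hj)).2
      apply hA
      funext x
      have e1 : (A i x = true) ↔ x ∈ ({g1 i} : Finset (Fin n)) := by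
        rw [← hg1 i hi']; simp
      have e2 : (A j x = true) ↔ x ∈ ({g1 j} : Finset (Fin n)) := by
        rw [← hg1 j hj']; simp
      rw [hij] at e1
      rw [Bool.eq_iff_iff]
      rw [e1, e2]
    -- rows with exactly two 1s
    have htwo : ∀ i : Fin m, ∃ p : Fin n × Fin n, rc i = 2 →
        (p.1.1 < p.2.1 ∧ (Finset.univ.filter fun j => A i j = true) = {p.1, p.2}) := by
      intro i
      by_cases h : rc i = 2
      · obtain ⟨x, y, hxy, hset⟩ := Finset.card_eq_two.mp h
        rcases lt_or_gt_of_ne hxy with hlt | hgt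
        · exact ⟨(x, y), fun _ => ⟨hlt, hset⟩⟩
        · exact ⟨(y, x), fun _ => ⟨hgt, by rw [hset]; exact Finset.pair_comm x y⟩⟩
      · exact ⟨(⟨0, hn⟩, ⟨0, hn⟩), fun hh => absurd hh h⟩
    choose g2 hg2 using htwo
    have hR2 : (Finset.univ.filter fun i : Fin m => rc i = 2).card ≤ E.card := by
      apply Finset.card_le_card_of_injOn (fun i => ((g2 i).1.1, (g2 i).2.1))
      · intro i hi
        have hi' := (Finset.mem_filter.mp hi).2
        obtain ⟨hlt, hset⟩ := hg2 i hi'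
        simp only [Finset.mem_coe, hE_def, Finset.mem_image]
        refine ⟨g2 i, ?_, rfl⟩
        rw [Finset.mem_filter]
        refine ⟨Finset.mem_univ _, hlt, i, ?_, ?_⟩
        · have : (g2 i).1 ∈ (Finset.univ.filter fun j => A i j = true) := by
            rw [hset]; exact Finset.mem_insert_self _ _
          exact (Finset.mem_filter.mp this).2
        · have : (g2 i).2 ∈ (Finset.univ.filter fun j => A i j = true) := by
            rw [hset]
            exact Finset.mem_insert_of_mem (Finset.mem_singleton_self _)
          exact (Finset.mem_filter.mp this).2
      · intro i hi j hj hij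
        have hi' := (Finset.mem_filter.mp (Finset.mem_coe.mp hi)).2
        have hj' := (Finset.mem_filter.mp (Finset.mem_coe.mp hj)).2
        obtain ⟨hlti, hseti⟩ := hg2 i hi'
        obtain ⟨hltj, hsetj⟩ := hg2 j hj'
        rw [Prod.mk.injEq] at hij
        have hfst : (g2 i).1 = (g2 j).1 := Fin.ext hij.1
        have hsnd : (g2 i).2 = (g2 j).2 := Fin.ext hij.2
        apply hA
        funext x
        have e1 : (A i x = true) ↔ x ∈ ({(g2 i).1, (g2 i).2} : Finset (Fin n)) := by
          rw [← hseti]; simp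
        have e2 : (A j x = true) ↔ x ∈ ({(g2 j).1, (g2 j).2} : Finset (Fin n)) := by
          rw [← hsetj]; simp
        rw [hfst, hsnd] at e1
        rw [Bool.eq_iff_iff, e1, e2]
    -- the counting inequality
    have hcount : onesCount A ≤ 2 * E.card + n := by
      rw [hsum]
      have hstep : ∀ i : Fin m,
          ((Finset.univ.filter fun p : Fin m × Fin n => A p.1 p.2 = true).filter
            fun p => p.1 = i).card = rc i := hfib
      calc ∑ i : Fin m, ((Finset.univ.filter fun p : Fin m × Fin n =>
              A p.1 p.2 = true).filter fun p => p.1 = i).card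
          = ∑ i : Fin m, rc i := Finset.sum_congr rfl (fun i _ => hfib i)
        _ = ∑ i ∈ Finset.univ.filter (fun i : Fin m => rc i = 2), rc i +
            ∑ i ∈ Finset.univ.filter (fun i : Fin m => ¬ rc i = 2), rc i :=
            (Finset.sum_filter_add_sum_filter_not _ _ _).symm
        _ ≤ 2 * E.card + n := by
          have hA1 : ∑ i ∈ Finset.univ.filter (fun i : Fin m => rc i = 2), rc i =
              2 * (Finset.univ.filter (fun i : Fin m => rc i = 2)).card := by
            rw [Finset.sum_congr rfl (fun i hi => (Finset.mem_filter.mp hi).2),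
              Finset.sum_const, smul_eq_mul, mul_comm]
          have hA2 : ∑ i ∈ Finset.univ.filter (fun i : Fin m => ¬ rc i = 2), rc i ≤
              (Finset.univ.filter fun i : Fin m => rc i = 1).card := by
            rw [← Finset.sum_filter_add_sum_filter_not
              (Finset.univ.filter (fun i : Fin m => ¬ rc i = 2)) (fun i => rc i = 1) rc]
            have hz : ∑ i ∈ (Finset.univ.filter (fun i : Fin m => ¬ rc i = 2)).filter
                (fun i => ¬ rc i = 1), rc i = 0 := by
              apply Finset.sum_eq_zero
              intro i hi
              rw [Finset.mem_filter, Finset.mem_filter] at hi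
              have h2i : rc i ≤ 2 := h2 i
              omega
            rw [hz, add_zero]
            calc ∑ i ∈ (Finset.univ.filter (fun i : Fin m => ¬ rc i = 2)).filter
                  (fun i => rc i = 1), rc i
                = ((Finset.univ.filter (fun i : Fin m => ¬ rc i = 2)).filter
                  (fun i => rc i = 1)).card := by
                  rw [Finset.sum_congr rfl
                    (fun i hi => (Finset.mem_filter.mp hi).2), Finset.sum_const,
                    smul_eq_mul, mul_one]
              _ ≤ _ := by
                  apply Finset.card_le_card
                  intro i hi
                  rw [Finset.mem_filter] at hi ⊢
                  exact ⟨Finset.mem_univ _, hi.2⟩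
          calc _ ≤ 2 * (Finset.univ.filter (fun i : Fin m => rc i = 2)).card +
                (Finset.univ.filter fun i : Fin m => rc i = 1).card := by
                rw [hA1]; exact Nat.add_le_add_left hA2 _
            _ ≤ 2 * E.card + n := Nat.add_le_add (Nat.mul_le_mul_left 2 hR2) hR1
    -- conclude E is large
    have hElarge : ¬ (E.card ≤ c * n) := by
      intro hle
      have h2' : (2 * c + 2) * n = 2 * (c * n) + 2 * n := by ring
      omega
    -- now build the containment
    intro σ
    have hPat : Pat k σ E := by
      by_contra hno
      exact hElarge (hc σ n E hEcond hno)
    obtain ⟨cc, hmono, hmem⟩ := hPat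
    have hget : ∀ i : Fin k, ∃ w : Fin m, ∃ u v : Fin n, u.1 = cc (finL k i) ∧
        v.1 = cc (finR k (σ i)) ∧ A w u = true ∧ A w v = true := by
      intro i
      have := hmem i
      rw [hE_def, Finset.mem_image] at this
      obtain ⟨e, he, heq⟩ := this
      rw [Finset.mem_filter] at he
      obtain ⟨-, -, w, h1, h2⟩ := he
      rw [Prod.mk.injEq] at heq
      exact ⟨w, e.1, e.2, heq.1, heq.2, h1, h2⟩
    choose w u v hu hv hAu hAv using hget
    have hbound : ∀ a : Fin (2 * k), cc a < n := by
      intro a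
      by_cases h : a.1 < k
      · have ha : finL k ⟨a.1, h⟩ = a := Fin.ext rfl
        rw [← ha, ← hu ⟨a.1, h⟩]
        exact (u _).isLt
      · have hak : a.1 - k < k := by have := a.isLt; omega
        have hja : finR k (σ (σ⁻¹ ⟨a.1 - k, hak⟩)) = a := by
          rw [Equiv.Perm.coe_inv, Equiv.apply_symm_apply]
          apply Fin.ext
          simp only [finR]
          have := a.isLt
          omega
        rw [← hja, ← hv (σ⁻¹ ⟨a.1 - k, hak⟩)]
        exact (v _).isLt
    set c' : Fin (2 * k) → Fin n := fun a => ⟨cc a, hbound a⟩ with hc'_def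
    have hc'u : ∀ i : Fin k, c' (finL k i) = u i := fun i => Fin.ext (hu i).symm
    have hc'v : ∀ i : Fin k, c' (finR k (σ i)) = v i := fun i => Fin.ext (hv i).symm
    have hc'mono : StrictMono c' := fun a b hab => hmono hab
    refine ⟨w, c', ?_, hc'mono, fun i => ?_⟩
    · intro i j hij
      by_contra hne
      -- row w i has at least three ones
      have hx12 : c' (finL k i) ≠ c' (finL k j) := by
        intro hh
        apply hne
        have := hc'mono.injective hh
        simpa [finL, Fin.ext_iff] using this
      have hx1y : c' (finL k i) ≠ c' (finR k (σ j)) := by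
        intro hh
        have := hc'mono.injective hh
        rw [Fin.ext_iff] at this
        simp only [finL, finR] at this
        have hik := i.isLt
        omega
      have hx2y : c' (finL k j) ≠ c' (finR k (σ j)) := by
        intro hh
        have := hc'mono.injective hh
        rw [Fin.ext_iff] at this
        simp only [finL, finR] at this
        have hjk := j.isLt
        omega
      have hsub : ({c' (finL k i), c' (finL k j), c' (finR k (σ j))} : Finset (Fin n)) ⊆
          Finset.univ.filter (fun jj => A (w i) jj = true) := by
        intro z hz
        rw [Finset.mem_insert, Finset.mem_insert, Finset.mem_singleton] at hz
        rw [Finset.mem_filter]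
        refine ⟨Finset.mem_univ _, ?_⟩
        rcases hz with rfl | rfl | rfl
        · rw [hc'u i]; exact hAu i
        · rw [hc'u j, hij]; exact hAu j
        · rw [hc'v j, hij]; exact hAv j
      have hcard3 : ({c' (finL k i), c' (finL k j), c' (finR k (σ j))} :
          Finset (Fin n)).card = 3 := by
        rw [Finset.card_insert_of_notMem, Finset.card_insert_of_notMem,
          Finset.card_singleton]
        · rw [Finset.mem_singleton]; exact hx2y
        · rw [Finset.mem_insert, Finset.mem_singleton]
          rintro (hh | hh)
          · exact hx12 hh
          · exact hx1y hh
      have := Finset.card_le_card hsub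
      rw [hcard3] at this
      have := h2 (w i)
      omega
    · constructor
      · rw [hc'u i]; exact hAu i
      · rw [hc'v i]; exact hAv i
end
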